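/- arXiv:1208.4090 — 5 statements merged into one kernel-verified Lean document; each statement's English description precedes it below -/
import Mathlib

section
/- Suppose η : ℤ² → A admits an η-generating set S, and S′ ⊇ S is any finite set. Then the ℤ²-subshift of finite type X_{S′}(η) generated by the S′-words of η has topological entropy zero; equivalently, lim_{N→∞} (1/N²) log P(N,N) = 0, where P(N,N) counts the N×N patterns occurring in elements of X_{S′}(η). -/
open Classical

namespace Nivat

noncomputable section

/-- Embedding of `ℤ × ℤ` into `ℝ × ℝ`. -/
def e (p : ℤ × ℤ) : ℝ × ℝ := ((p.1 : ℝ), (p.2 : ℝ))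

/-- A finite set `S ⊆ ℤ²` is convex if `S = conv(S) ∩ ℤ²`. -/
def IsConvexSet (S : Finset (ℤ × ℤ)) : Prop :=
  ∀ p : ℤ × ℤ, e p ∈ convexHull ℝ (e '' (S : Set (ℤ × ℤ))) → p ∈ S

variable {A : Type*}

/-- The `η`-coloring of `S` induced by the translate by `u`. -/
def pat (η : ℤ × ℤ → A) (S : Finset (ℤ × ℤ)) (u : ℤ × ℤ) : S → A :=
  fun x => η ((x : ℤ × ℤ) + u)

/-- `P_η(S)`: number of distinct `η`-colorings of `S`. -/
def Pc (η : ℤ × ℤ → A) (S : Finset (ℤ × ℤ)) : ℕ :=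
  (Set.range (pat η S)).ncard

/-- Discrepancy `D_η(S) = P_η(S) - |S|`. -/
def Dc (η : ℤ × ℤ → A) (S : Finset (ℤ × ℤ)) : ℤ :=
  (Pc η S : ℤ) - (S.card : ℤ)

/-- Restriction of a coloring of `S` to a subset `T`. -/
def res {S T : Finset (ℤ × ℤ)} (h : T ⊆ S) (f : S → A) : T → A :=
  fun x => f ⟨(x : ℤ × ℤ), h x.2⟩

/-- A coloring `α` of `T` extends uniquely to an `η`-coloring of `S`. -/
def ExtendsUniquely (η : ℤ × ℤ → A) {T S : Finset (ℤ × ℤ)} (h : T ⊆ S) (α : T → A) : Prop :=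
  ∃! β : S → A, β ∈ Set.range (pat η S) ∧ res h β = α

/-- A coloring `α` of `T` has at least two extensions to `η`-colorings of `S`. -/
def ExtendsNonUniquely (η : ℤ × ℤ → A) {T S : Finset (ℤ × ℤ)} (h : T ⊆ S) (α : T → A) : Prop :=
  ∃ β₁ β₂ : S → A, β₁ ∈ Set.range (pat η S) ∧ β₂ ∈ Set.range (pat η S) ∧
    β₁ ≠ β₂ ∧ res h β₁ = α ∧ res h β₂ = α

theorem eraseSub (S : Finset (ℤ × ℤ)) (x : ℤ × ℤ) : S.erase x ⊆ S :=
  fun _ hy => Finset.mem_of_mem_erase hy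

theorem sdiffSub (S T : Finset (ℤ × ℤ)) : S \ T ⊆ S :=
  fun _ hy => (Finset.mem_sdiff.mp hy).1

/-- `x ∈ S` is `η`-generated by `S`: every `η`-coloring of `S \ {x}`
extends uniquely to an `η`-coloring of `S`. -/
def Generated (η : ℤ × ℤ → A) (S : Finset (ℤ × ℤ)) (x : ℤ × ℤ) : Prop :=
  ∀ α ∈ Set.range (pat η (S.erase x)), ExtendsUniquely η (eraseSub S x) α

/-- `x` is an extreme point of the convex polygon `conv(S)`. -/
def IsExtremePt (S : Finset (ℤ × ℤ)) (x : ℤ × ℤ) : Prop :=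
  e x ∈ Set.extremePoints ℝ (convexHull ℝ (e '' (S : Set (ℤ × ℤ))))

/-- A weak `η`-generating set: finite, nonempty, convex, and every extreme
point is `η`-generated. -/
def WeakGenerating (η : ℤ × ℤ → A) (S : Finset (ℤ × ℤ)) : Prop :=
  S.Nonempty ∧ IsConvexSet S ∧ ∀ x ∈ S, IsExtremePt S x → Generated η S x

/-- An `η`-generating set: weak generating and every nonempty proper convex
subset has strictly larger discrepancy. -/
def Generating (η : ℤ × ℤ → A) (S : Finset (ℤ × ℤ)) : Prop :=
  WeakGenerating η S ∧
    ∀ T ⊆ S, T ≠ S → T.Nonempty → IsConvexSet T → Dc η S < Dc η T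

/-- The segment from `e p` to `e q` is a (1-dimensional exposed) boundary edge
of the convex polygon `conv(S)`. -/
def IsEdge (S : Finset (ℤ × ℤ)) (p q : ℤ × ℤ) : Prop :=
  p ≠ q ∧ p ∈ S ∧ q ∈ S ∧ ∃ ℓ : (ℝ × ℝ) →ₗ[ℝ] ℝ, ∃ c : ℝ,
    (∀ x ∈ convexHull ℝ (e '' (S : Set (ℤ × ℤ))), ℓ x ≤ c) ∧
    {x ∈ convexHull ℝ (e '' (S : Set (ℤ × ℤ))) | ℓ x = c} = segment ℝ (e p) (e q)

/-- An edge of `S`, oriented positively (the set lies to the left of `p → q`). -/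
def IsOrientedEdge (S : Finset (ℤ × ℤ)) (p q : ℤ × ℤ) : Prop :=
  IsEdge S p q ∧ ∀ x ∈ S, 0 ≤ (q.1 - p.1) * (x.2 - p.2) - (q.2 - p.2) * (x.1 - p.1)

/-- The lattice points of `S` lying on the edge from `p` to `q`. -/
def edgePts (S : Finset (ℤ × ℤ)) (p q : ℤ × ℤ) : Finset (ℤ × ℤ) :=
  S.filter (fun x => e x ∈ segment ℝ (e p) (e q))

/-- The rectangle `R_{n,k} = [0,n) × [0,k) ∩ ℤ²`. -/
def Rect (n k : ℕ) : Finset (ℤ × ℤ) :=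
  Finset.Ico (0 : ℤ) (n : ℤ) ×ˢ Finset.Ico (0 : ℤ) (k : ℤ)

/-- `η` is aperiodic: no nonzero period vector. -/
def Aperiodic (η : ℤ × ℤ → A) : Prop :=
  ∀ v : ℤ × ℤ, v ≠ 0 → ∃ x : ℤ × ℤ, η (x + v) ≠ η x

/-- Action of a `2 × 2` integer matrix on `ℤ²`. -/
def Mv (M : Matrix (Fin 2) (Fin 2) ℤ) (p : ℤ × ℤ) : ℤ × ℤ :=
  (M 0 0 * p.1 + M 0 1 * p.2, M 1 0 * p.1 + M 1 1 * p.2)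

/-- `u` and `v` are positively parallel (same direction). -/
def PosParallel (u v : ℤ × ℤ) : Prop :=
  ∃ t₁ t₂ : ℤ, 0 < t₁ ∧ 0 < t₂ ∧ t₁ • u = t₂ • v

/-- The directed rational line through the origin with direction `d` is
one-sided `η`-expansive: for some `a, b ∈ ℕ` and `A ∈ SL₂(ℤ)` taking the
downward `y`-axis to the direction `d`, every `(η ∘ A)`-coloring of
`[0,a] × [-b,b]` extends uniquely to `[0,a] × [-b,b] ∪ {(-1,0)}`. -/
def OneSidedExpansive (η : ℤ × ℤ → A) (d : ℤ × ℤ) : Prop :=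
  ∃ a b : ℕ, ∃ M : Matrix (Fin 2) (Fin 2) ℤ, M.det = 1 ∧
    PosParallel (Mv M (0, -1)) d ∧
    ∀ u v : ℤ × ℤ,
      (∀ x : ℤ × ℤ, 0 ≤ x.1 → x.1 ≤ (a : ℤ) → -(b : ℤ) ≤ x.2 → x.2 ≤ (b : ℤ) →
        η (Mv M (x + u)) = η (Mv M (x + v))) →
      η (Mv M ((-1, 0) + u)) = η (Mv M ((-1, 0) + v))

end

end Nivat

namespace Nivat

section Aux

variable {A : Type*}

theorem step (η : ℤ × ℤ → A) (S : Finset (ℤ × ℤ)) (x : ℤ × ℤ) (hx : x ∈ S)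
    (hgen : Generated η S x) (f f' : ℤ × ℤ → A) (p : ℤ × ℤ)
    (hf : ∃ v, ∀ s ∈ S, f (s + (p - x)) = η (s + v))
    (hf' : ∃ v, ∀ s ∈ S, f' (s + (p - x)) = η (s + v))
    (hagree : ∀ s ∈ S.erase x, f (s + (p - x)) = f' (s + (p - x))) :
    f p = f' p := by
  obtain ⟨v, hv⟩ := hf
  obtain ⟨v', hv'⟩ := hf'
  set u := p - x with hu
  have hβ : (fun s : S => f ((s : ℤ × ℤ) + u)) ∈ Set.range (pat η S) :=
    ⟨v, funext fun s => (hv s s.2).symm⟩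
  have hβ' : (fun s : S => f' ((s : ℤ × ℤ) + u)) ∈ Set.range (pat η S) :=
    ⟨v', funext fun s => (hv' s s.2).symm⟩
  have hα : (fun s : S.erase x => f ((s : ℤ × ℤ) + u)) ∈ Set.range (pat η (S.erase x)) :=
    ⟨v, funext fun s => (hv s (Finset.mem_of_mem_erase s.2)).symm⟩
  obtain ⟨γ, _, huniq⟩ := hgen _ hα
  have h1 : (fun s : S => f ((s : ℤ × ℤ) + u)) = γ := huniq _ ⟨hβ, rfl⟩
  have h2 : (fun s : S => f' ((s : ℤ × ℤ) + u)) = γ :=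
    huniq _ ⟨hβ', funext fun s => (hagree s s.2).symm⟩
  have := congrFun (h1.trans h2.symm) ⟨x, hx⟩
  simpa [show x + u = p by rw [hu]; ring] using this

theorem detRegion (η : ℤ × ℤ → A) (S : Finset (ℤ × ℤ)) (x : ℤ × ℤ) (hx : x ∈ S)
    (hgen : Generated η S x) (K w r₁ r₂ m G L₁ L₂ : ℤ)
    (hw : ∀ s ∈ S, K * x.1 + x.2 - (K * s.1 + s.2) ≤ w)
    (hstrict : ∀ s ∈ S, s ≠ x → K * s.1 + s.2 < K * x.1 + x.2)
    (hr₁ : ∀ s ∈ S, |x.1 - s.1| ≤ r₁) (hr₂ : ∀ s ∈ S, |x.2 - s.2| ≤ r₂)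
    (hr₁0 : 0 ≤ r₁) (hr₂0 : 0 ≤ r₂)
    (f f' : ℤ × ℤ → A)
    (hf : ∀ u, ∃ v, ∀ s ∈ S, f (s + u) = η (s + v))
    (hf' : ∀ u, ∃ v, ∀ s ∈ S, f' (s + u) = η (s + v))
    (hT : ∀ q : ℤ × ℤ, m ≤ K * q.1 + q.2 → K * q.1 + q.2 ≤ m + w →
      |q.1| ≤ L₁ + r₁ * (G - m) → |q.2| ≤ L₂ + r₂ * (G - m) → f q = f' q) :
    ∀ n : ℕ, ∀ p : ℤ × ℤ, (K * p.1 + p.2 - m).toNat = n →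
      m ≤ K * p.1 + p.2 → K * p.1 + p.2 ≤ G →
      |p.1| ≤ L₁ + r₁ * (G - (K * p.1 + p.2)) →
      |p.2| ≤ L₂ + r₂ * (G - (K * p.1 + p.2)) →
      f p = f' p := by
  intro n
  induction n using Nat.strong_induction_on with
  | _ n ih =>
    intro p hpn hpm hpG hp1 hp2
    by_cases hcase : K * p.1 + p.2 ≤ m + w
    · refine hT p hpm hcase (le_trans hp1 ?_) (le_trans hp2 ?_)
      · have : r₁ * (G - (K * p.1 + p.2)) ≤ r₁ * (G - m) :=
          mul_le_mul_of_nonneg_left (by linarith) hr₁0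
        linarith
      · have : r₂ * (G - (K * p.1 + p.2)) ≤ r₂ * (G - m) :=
          mul_le_mul_of_nonneg_left (by linarith) hr₂0
        linarith
    · push_neg at hcase
      refine step η S x hx hgen f f' p (hf (p - x)) (hf' (p - x)) ?_
      intro s hs
      obtain ⟨hsne, hsS⟩ := Finset.mem_erase.mp hs
      set q := s + (p - x) with hq
      have hq1 : q.1 = p.1 - (x.1 - s.1) := by simp [hq]; ring
      have hq2 : q.2 = p.2 - (x.2 - s.2) := by simp [hq]; ring
      have hd1 : 1 ≤ K * x.1 + x.2 - (K * s.1 + s.2) := by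
        have := hstrict s hsS hsne; linarith
      have hdw : K * x.1 + x.2 - (K * s.1 + s.2) ≤ w := hw s hsS
      have hgq : K * q.1 + q.2 = (K * p.1 + p.2) - (K * x.1 + x.2 - (K * s.1 + s.2)) := by
        rw [hq1, hq2]; ring
      have hqm : m ≤ K * q.1 + q.2 := by rw [hgq]; linarith
      have hqlt : K * q.1 + q.2 < K * p.1 + p.2 := by rw [hgq]; linarith
      have habs1 : |q.1| ≤ |p.1| + r₁ := by
        rw [hq1]
        calc |p.1 - (x.1 - s.1)| ≤ |p.1| + |x.1 - s.1| := abs_sub _ _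
        _ ≤ |p.1| + r₁ := by have := hr₁ s hsS; linarith
      have habs2 : |q.2| ≤ |p.2| + r₂ := by
        rw [hq2]
        calc |p.2 - (x.2 - s.2)| ≤ |p.2| + |x.2 - s.2| := abs_sub _ _
        _ ≤ |p.2| + r₂ := by have := hr₂ s hsS; linarith
      refine ih (K * q.1 + q.2 - m).toNat (by omega) q rfl hqm (by omega) ?_ ?_
      · have : r₁ * (G - (K * p.1 + p.2)) + r₁ ≤ r₁ * (G - (K * q.1 + q.2)) := by
          have : r₁ * (G - (K * p.1 + p.2) + 1) ≤ r₁ * (G - (K * q.1 + q.2)) :=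
            mul_le_mul_of_nonneg_left (by omega) hr₁0
          linarith [this]
        linarith
      · have : r₂ * (G - (K * p.1 + p.2) + 1) ≤ r₂ * (G - (K * q.1 + q.2)) :=
          mul_le_mul_of_nonneg_left (by omega) hr₂0
        linarith

theorem extreme_of_strict_max (S : Finset (ℤ × ℤ)) (x : ℤ × ℤ) (hx : x ∈ S) (K : ℤ)
    (hstrict : ∀ s ∈ S, s ≠ x → K * s.1 + s.2 < K * x.1 + x.2) :
    IsExtremePt S x := by
  set κ : ℝ := (K : ℝ)
  set L : ℝ × ℝ → ℝ := fun y => κ * y.1 + y.2 with hL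
  set c : ℝ := L (e x) with hc
  set H : Set (ℝ × ℝ) := {y | L y < c ∨ y = e x} with hH
  have hLle : ∀ y ∈ H, L y ≤ c := by
    rintro y (h | h)
    · exact le_of_lt h
    · rw [h]
  have hlin : ∀ (a b : ℝ) (y z : ℝ × ℝ), L (a • y + b • z) = a * L y + b * L z := by
    intro a b y z
    simp only [hL, Prod.fst_add, Prod.snd_add, Prod.smul_fst, Prod.smul_snd, smul_eq_mul]
    ring
  have hconv : Convex ℝ H := by
    rintro y₁ hy₁ y₂ hy₂ a b ha hb hab
    have hcomb : L (a • y₁ + b • y₂) = a * L y₁ + b * L y₂ := hlin a b y₁ y₂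
    rcases eq_or_lt_of_le ha with ha0 | ha0
    · have hb1 : b = 1 := by linarith
      have : a • y₁ + b • y₂ = y₂ := by rw [← ha0, hb1]; simp
      rw [this]; exact hy₂
    rcases eq_or_lt_of_le hb with hb0 | hb0
    · have ha1 : a = 1 := by linarith
      have : a • y₁ + b • y₂ = y₁ := by rw [← hb0, ha1]; simp
      rw [this]; exact hy₁
    rcases hy₁ with h1 | h1
    · left
      rw [hcomb]
      have h2' : L y₂ ≤ c := hLle y₂ hy₂
      have e1 : a * L y₁ < a * c := mul_lt_mul_of_pos_left h1 ha0
      have e2 : b * L y₂ ≤ b * c := mul_le_mul_of_nonneg_left h2' hb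
      have e3 : a * c + b * c = c := by rw [← add_mul, hab, one_mul]
      linarith
    rcases hy₂ with h2 | h2
    · left
      rw [hcomb]
      have h1' : L y₁ = c := by rw [h1]
      have e1 : b * L y₂ < b * c := mul_lt_mul_of_pos_left h2 hb0
      have e3 : a * c + b * c = c := by rw [← add_mul, hab, one_mul]
      have e0 : a * L y₁ = a * c := by rw [h1']
      linarith
    · right
      rw [h1, h2, ← add_smul, hab, one_smul]
  have hsub : e '' (S : Set (ℤ × ℤ)) ⊆ H := by
    rintro y ⟨s, hs, rfl⟩
    by_cases hsx : s = x
    · right; rw [hsx]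
    · left
      have := hstrict s hs hsx
      have : (K * s.1 + s.2 : ℝ) < (K * x.1 + x.2 : ℝ) := by exact_mod_cast this
      simpa [hL, hc, e] using this
  have hhull : convexHull ℝ (e '' (S : Set (ℤ × ℤ))) ⊆ H := convexHull_min hsub hconv
  rw [IsExtremePt, mem_extremePoints]
  refine ⟨subset_convexHull ℝ _ ⟨x, hx, rfl⟩, ?_⟩
  intro x₁ hx₁ x₂ hx₂ hseg
  obtain ⟨a, b, ha, hb, hab, hcomb⟩ := hseg
  have hLcomb : a * L x₁ + b * L x₂ = c := by
    rw [← hlin a b x₁ x₂, hcomb]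
  have hL1 : L x₁ ≤ c := hLle x₁ (hhull hx₁)
  have hL2 : L x₂ ≤ c := hLle x₂ (hhull hx₂)
  have hx1eq : x₁ = e x := by
    rcases hhull hx₁ with h | h
    · exfalso
      have e1 : a * L x₁ < a * c := mul_lt_mul_of_pos_left h ha
      have e2 : b * L x₂ ≤ b * c := mul_le_mul_of_nonneg_left hL2 hb.le
      have e3 : a * c + b * c = c := by rw [← add_mul, hab, one_mul]
      linarith
    · exact h
  have hx2eq : x₂ = e x := by
    rcases hhull hx₂ with h | h
    · exfalso
      have e1 : b * L x₂ < b * c := mul_lt_mul_of_pos_left h hb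
      have e2 : a * L x₁ ≤ a * c := mul_le_mul_of_nonneg_left hL1 ha.le
      have e3 : a * c + b * c = c := by rw [← add_mul, hab, one_mul]
      linarith
    · exact h
  exact ⟨hx1eq, hx2eq⟩

theorem le_sup'' {α β : Type*} [SemilatticeSup α] {s : Finset β} (H : s.Nonempty) (f : β → α)
    {b : β} (h : b ∈ s) : f b ≤ s.sup' H f := Finset.le_sup' f h

theorem countBound {A : Type*} [Finite A] (η : ℤ × ℤ → A) (S S' : Finset (ℤ × ℤ)) (hSS' : S ⊆ S')
    (x : ℤ × ℤ) (hx : x ∈ S) (hgen : Generated η S x) (K W r₁ r₂ : ℤ)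
    (hW : ∀ s ∈ S, K * x.1 + x.2 - (K * s.1 + s.2) ≤ W)
    (hstrict : ∀ s ∈ S, s ≠ x → K * s.1 + s.2 < K * x.1 + x.2)
    (hr₁ : ∀ s ∈ S, |x.1 - s.1| ≤ r₁) (hr₂ : ∀ s ∈ S, |x.2 - s.2| ≤ r₂)
    (hr₁0 : 0 ≤ r₁) (hr₂0 : 0 ≤ r₂) (hK0 : 0 ≤ K) (hW1 : 1 ≤ W) (N : ℕ) :
    ∃ t : ℕ,
      Set.ncard {w : Fin N × Fin N → A | ∃ f : ℤ × ℤ → A,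
          (∀ u : ℤ × ℤ, ∃ v : ℤ × ℤ, ∀ x ∈ S', f (x + u) = η (x + v)) ∧
          ∃ u : ℤ × ℤ, ∀ p : Fin N × Fin N,
            w p = f (u + (((p.1 : ℕ) : ℤ), ((p.2 : ℕ) : ℤ)))} ≤ Nat.card A ^ t ∧
      (t : ℤ) ≤ (W + 1) * (2 * ((N : ℤ) + r₁ * ((K + 1) * N + W)) + 1) := by
  set m : ℤ := -W with hm
  set G : ℤ := (K + 1) * N with hG
  set R₁ : ℤ := (N : ℤ) + r₁ * (G - m) with hR₁
  set R₂ : ℤ := (N : ℤ) + r₂ * (G - m) with hR₂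
  set TN : Finset (ℤ × ℤ) := (Finset.Icc (-R₁) R₁ ×ˢ Finset.Icc (-R₂) R₂).filter
    (fun q => m ≤ K * q.1 + q.2 ∧ K * q.1 + q.2 ≤ m + W) with hTN
  set P : Set (Fin N × Fin N → A) := {w : Fin N × Fin N → A | ∃ f : ℤ × ℤ → A,
          (∀ u : ℤ × ℤ, ∃ v : ℤ × ℤ, ∀ x ∈ S', f (x + u) = η (x + v)) ∧
          ∃ u : ℤ × ℤ, ∀ p : Fin N × Fin N,
            w p = f (u + (((p.1 : ℕ) : ℤ), ((p.2 : ℕ) : ℤ)))} with hP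
  refine ⟨TN.card, ?_, ?_⟩
  · -- counting via injection
    have trans : ∀ wp : P, ∃ gfun : ℤ × ℤ → A,
        (∀ u, ∃ v, ∀ s ∈ S, gfun (s + u) = η (s + v)) ∧
        (∀ p : Fin N × Fin N, (wp : Fin N × Fin N → A) p
          = gfun (((p.1 : ℕ) : ℤ), ((p.2 : ℕ) : ℤ))) := by
      rintro ⟨wp, f, hfc, u, hu⟩
      refine ⟨fun q => f (u + q), ?_, fun p => hu p⟩
      intro u₀
      obtain ⟨v, hv⟩ := hfc (u₀ + u)
      exact ⟨v, fun s hs => by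
        show f (u + (s + u₀)) = η (s + v)
        rw [show u + (s + u₀) = s + (u₀ + u) from by ring]
        exact hv s (hSS' hs)⟩
    choose gf hgf1 hgf2 using trans
    have hinj : Function.Injective (fun wp : P => (fun t : TN => gf wp (t : ℤ × ℤ))) := by
      intro w1 w2 hF
      have hag : ∀ q ∈ TN, gf w1 q = gf w2 q := fun q hq => congrFun hF ⟨q, hq⟩
      have hdet := detRegion η S x hx hgen K W r₁ r₂ m G (N : ℤ) (N : ℤ)
        hW hstrict hr₁ hr₂ hr₁0 hr₂0 (gf w1) (gf w2) (hgf1 w1) (hgf1 w2) ?_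
      · have hsq : ∀ p : Fin N × Fin N,
            gf w1 (((p.1 : ℕ) : ℤ), ((p.2 : ℕ) : ℤ)) = gf w2 (((p.1 : ℕ) : ℤ), ((p.2 : ℕ) : ℤ)) := by
          intro p
          have hp10 : (0 : ℤ) ≤ ((p.1 : ℕ) : ℤ) := Int.ofNat_nonneg _
          have hp20 : (0 : ℤ) ≤ ((p.2 : ℕ) : ℤ) := Int.ofNat_nonneg _
          have hp1N : ((p.1 : ℕ) : ℤ) < N := by exact_mod_cast p.1.isLt
          have hp2N : ((p.2 : ℕ) : ℤ) < N := by exact_mod_cast p.2.isLt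
          have hK1 : K * ((p.1 : ℕ) : ℤ) ≤ K * N :=
            mul_le_mul_of_nonneg_left (le_of_lt hp1N) hK0
          have hKp0 : 0 ≤ K * ((p.1 : ℕ) : ℤ) := mul_nonneg hK0 hp10
          have hgle : K * ((p.1 : ℕ) : ℤ) + ((p.2 : ℕ) : ℤ) ≤ G := by
            rw [hG]; linarith
          have hgge : m ≤ K * ((p.1 : ℕ) : ℤ) + ((p.2 : ℕ) : ℤ) := by
            rw [hm]; linarith
          refine hdet _ (((p.1 : ℕ) : ℤ), ((p.2 : ℕ) : ℤ)) rfl hgge hgle ?_ ?_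
          · have h0 : 0 ≤ r₁ * (G - (K * ((p.1 : ℕ) : ℤ) + ((p.2 : ℕ) : ℤ))) :=
              mul_nonneg hr₁0 (by linarith)
            rw [abs_of_nonneg hp10]; simp only []; linarith
          · have h0 : 0 ≤ r₂ * (G - (K * ((p.1 : ℕ) : ℤ) + ((p.2 : ℕ) : ℤ))) :=
              mul_nonneg hr₂0 (by linarith)
            rw [abs_of_nonneg hp20]; simp only []; linarith
        apply Subtype.ext
        funext p
        rw [hgf2 w1 p, hgf2 w2 p, hsq p]
      · intro q h1 h2 h3 h4
        apply hag
        rw [hTN, Finset.mem_filter, Finset.mem_product, Finset.mem_Icc, Finset.mem_Icc]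
        refine ⟨⟨?_, ?_⟩, h1, h2⟩
        · rw [hR₁] at *; constructor <;> [linarith [neg_abs_le q.1]; linarith [le_abs_self q.1]]
        · rw [hR₂] at *; constructor <;> [linarith [neg_abs_le q.2]; linarith [le_abs_self q.2]]
    calc Set.ncard P = Nat.card P := (Nat.card_coe_set_eq P).symm
      _ ≤ Nat.card (TN → A) := Nat.card_le_card_of_injective _ hinj
      _ = Nat.card A ^ Nat.card TN := Nat.card_fun
      _ = Nat.card A ^ TN.card := by
          congr 1
          rw [Nat.card_eq_fintype_card, Fintype.card_coe]
  · -- cardinality bound on TN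
    have hR₁0 : 0 ≤ R₁ := by
      rw [hR₁, hG, hm]
      have h1 : (0 : ℤ) ≤ (K + 1) * N := mul_nonneg (by linarith) (Int.ofNat_nonneg N)
      have h2 : 0 ≤ r₁ * ((K + 1) * N - -W) := mul_nonneg hr₁0 (by linarith)
      linarith [Int.ofNat_nonneg N]
    have hcardle : TN.card ≤ (Finset.Icc m (m + W) ×ˢ Finset.Icc (-R₁) R₁).card := by
      apply Finset.card_le_card_of_injOn (fun q => (K * q.1 + q.2, q.1))
      · intro q hq
        simp only [Finset.mem_coe, hTN, Finset.mem_filter, Finset.mem_product, Finset.mem_Icc] at hq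
        rw [Finset.mem_coe, Finset.mem_product, Finset.mem_Icc, Finset.mem_Icc]
        exact ⟨⟨hq.2.1, hq.2.2⟩, hq.1.1⟩
      · intro q _ q' _ h
        have h1 : q.1 = q'.1 := congrArg Prod.snd h
        have h2 : K * q.1 + q.2 = K * q'.1 + q'.2 := congrArg Prod.fst h
        exact Prod.ext h1 (by rw [h1] at h2; linarith)
    have hprod : (Finset.Icc m (m + W) ×ˢ Finset.Icc (-R₁) R₁).card
        = (W + 1).toNat * (2 * R₁ + 1).toNat := by
      rw [Finset.card_product, Int.card_Icc, Int.card_Icc]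
      congr 1 <;> congr 1 <;> ring
    have : (TN.card : ℤ) ≤ ((W + 1).toNat : ℤ) * ((2 * R₁ + 1).toNat : ℤ) := by
      rw [← Nat.cast_mul, ← hprod]; exact_mod_cast hcardle
    rw [Int.toNat_of_nonneg (by linarith), Int.toNat_of_nonneg (by linarith)] at this
    have hrw : R₁ = (N : ℤ) + r₁ * ((K + 1) * N + W) := by rw [hR₁, hG, hm]; ring
    rw [hrw] at this
    exact this

end Aux

/-- If `η` admits an `η`-generating set `S` and `S' ⊇ S` is finite, then the
`ℤ²`-subshift of finite type generated by the `S'`-words of `η` has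
topological entropy zero: `(1/N²) log P(N,N) → 0`, where `P(N,N)` counts the
`N × N` patterns occurring in elements of `X_{S'}(η)`. -/

theorem statement10 {A : Type*} [Finite A] (η : ℤ × ℤ → A)
    (S S' : Finset (ℤ × ℤ)) (hS : Generating η S) (hSS' : S ⊆ S') :
    Filter.Tendsto (fun N : ℕ =>
      Real.log (Set.ncard {w : Fin N × Fin N → A | ∃ f : ℤ × ℤ → A,
          (∀ u : ℤ × ℤ, ∃ v : ℤ × ℤ, ∀ x ∈ S', f (x + u) = η (x + v)) ∧
          ∃ u : ℤ × ℤ, ∀ p : Fin N × Fin N,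
            w p = f (u + (((p.1 : ℕ) : ℤ), ((p.2 : ℕ) : ℤ)))}) / (N : ℝ) ^ 2)
      Filter.atTop (nhds 0) := by
  classical
  obtain ⟨⟨hne, _, hgenext⟩, _⟩ := hS
  -- the lexicographic functional
  set B : ℤ := S.sup' hne (fun s => |s.2|) with hB
  have hB0 : 0 ≤ B := by
    obtain ⟨x₀, hx₀⟩ := id hne
    have : |x₀.2| ≤ B := le_sup'' hne (fun s => |s.2|) hx₀
    linarith [abs_nonneg x₀.2]
  set K : ℤ := 2 * B + 1 with hK
  have hK0 : 0 ≤ K := by omega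
  obtain ⟨x, hxS, hxmax⟩ := Finset.exists_max_image S (fun s => K * s.1 + s.2) hne
  have hstrict : ∀ s ∈ S, s ≠ x → K * s.1 + s.2 < K * x.1 + x.2 := by
    intro s hs hsx
    rcases lt_or_eq_of_le (hxmax s hs) with h | h
    · exact h
    · exfalso
      have h2s : |s.2| ≤ B := le_sup'' hne (fun s => |s.2|) hs
      have h2x : |x.2| ≤ B := le_sup'' hne (fun s => |s.2|) hxS
      have heq : K * (s.1 - x.1) = x.2 - s.2 := by linarith [h]
      have h1 : s.1 = x.1 := by
        by_contra hne1
        have hd : 1 ≤ |s.1 - x.1| := by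
          rcases abs_pos.mpr (sub_ne_zero.mpr hne1) with h'
          omega
        have hKd : K ≤ K * |s.1 - x.1| := le_mul_of_one_le_right hK0 hd
        have habs : |K * (s.1 - x.1)| = K * |s.1 - x.1| := by
          rw [abs_mul, abs_of_nonneg hK0]
        have hx2 : |x.2 - s.2| ≤ 2 * B := by
          calc |x.2 - s.2| ≤ |x.2| + |s.2| := abs_sub x.2 s.2
          _ ≤ 2 * B := by linarith
        rw [heq] at habs
        linarith [habs, hKd, hx2]
      have h2 : s.2 = x.2 := by
        rw [h1] at heq; simp at heq; linarith
      exact hsx (Prod.ext h1 h2)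
  have hgenx : Generated η S x := hgenext x hxS (extreme_of_strict_max S x hxS K hstrict)
  -- constants
  set W : ℤ := 1 + S.sup' hne (fun s => K * x.1 + x.2 - (K * s.1 + s.2)) with hWdef
  have hW : ∀ s ∈ S, K * x.1 + x.2 - (K * s.1 + s.2) ≤ W := by
    intro s hs
    have h1 := le_sup'' hne (fun s => K * x.1 + x.2 - (K * s.1 + s.2)) hs
    rw [hWdef]
    linarith
  have hW1 : 1 ≤ W := by
    have h1 := le_sup'' hne (fun s => K * x.1 + x.2 - (K * s.1 + s.2)) hxS
    simp only [sub_self] at h1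
    rw [hWdef]
    linarith
  set r₁ : ℤ := S.sup' hne (fun s => |x.1 - s.1|) with hr₁def
  set r₂ : ℤ := S.sup' hne (fun s => |x.2 - s.2|) with hr₂def
  have hr₁ : ∀ s ∈ S, |x.1 - s.1| ≤ r₁ := fun s hs => le_sup'' hne (fun s => |x.1 - s.1|) hs
  have hr₂ : ∀ s ∈ S, |x.2 - s.2| ≤ r₂ := fun s hs => le_sup'' hne (fun s => |x.2 - s.2|) hs
  have hr₁0 : 0 ≤ r₁ := le_trans (abs_nonneg _) (hr₁ x hxS)
  have hr₂0 : 0 ≤ r₂ := le_trans (abs_nonneg _) (hr₂ x hxS)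
  -- basic facts about A
  have : Nonempty A := ⟨η 0⟩
  have hA1 : 1 ≤ Nat.card A := Nat.card_pos
  have hL0 : 0 ≤ Real.log (Nat.card A) := Real.log_nonneg (by exact_mod_cast hA1)
  -- nonemptiness and positivity of pattern counts
  have h1card : ∀ N : ℕ, 1 ≤ Set.ncard {w : Fin N × Fin N → A | ∃ f : ℤ × ℤ → A,
      (∀ u : ℤ × ℤ, ∃ v : ℤ × ℤ, ∀ x ∈ S', f (x + u) = η (x + v)) ∧
      ∃ u : ℤ × ℤ, ∀ p : Fin N × Fin N,
        w p = f (u + (((p.1 : ℕ) : ℤ), ((p.2 : ℕ) : ℤ)))} := by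
    intro N
    exact (Set.ncard_pos (Set.toFinite _)).mpr
      ⟨fun p => η ((0 : ℤ × ℤ) + (((p.1 : ℕ) : ℤ), ((p.2 : ℕ) : ℤ))),
        η, fun u => ⟨u, fun s _ => rfl⟩, 0, fun p => rfl⟩
  -- the squeeze
  set Cz : ℤ := (W + 1) * (3 + 2 * r₁ * (K + 1 + W)) with hCz
  apply squeeze_zero' (Filter.Eventually.of_forall ?_) ?_
    (tendsto_const_div_atTop_nhds_zero_nat ((Cz : ℝ) * Real.log (Nat.card A)))
  · intro N
    apply div_nonneg _ (sq_nonneg _)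
    apply Real.log_nonneg
    exact_mod_cast h1card N
  · filter_upwards [Filter.eventually_ge_atTop 1] with N hN
    obtain ⟨t, ht1, ht2⟩ := countBound η S S' hSS' x hxS hgenx K W r₁ r₂
      hW hstrict hr₁ hr₂ hr₁0 hr₂0 hK0 hW1 N
    have hN1 : (1 : ℤ) ≤ (N : ℤ) := by exact_mod_cast hN
    -- integer bound : t ≤ Cz * N
    have htz : (t : ℤ) ≤ Cz * N := by
      refine le_trans ht2 ?_
      rw [hCz]
      nlinarith [mul_nonneg (mul_nonneg (by linarith : (0:ℤ) ≤ W + 1) (by linarith : (0:ℤ) ≤ (N:ℤ) - 1))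
        (by nlinarith : (0:ℤ) ≤ 1 + 2 * r₁ * W), hW1, hr₁0, hK0, hN1]
    have hNR : (0 : ℝ) < (N : ℝ) := by exact_mod_cast lt_of_lt_of_le one_pos hN
    have hlog : Real.log (Set.ncard {w : Fin N × Fin N → A | ∃ f : ℤ × ℤ → A,
        (∀ u : ℤ × ℤ, ∃ v : ℤ × ℤ, ∀ x ∈ S', f (x + u) = η (x + v)) ∧
        ∃ u : ℤ × ℤ, ∀ p : Fin N × Fin N,
          w p = f (u + (((p.1 : ℕ) : ℤ), ((p.2 : ℕ) : ℤ)))})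
        ≤ ((Cz : ℝ) * Real.log (Nat.card A)) * N := by
      calc Real.log _ ≤ Real.log ((Nat.card A : ℝ) ^ t) := by
            apply Real.log_le_log
            · exact_mod_cast h1card N
            · exact_mod_cast ht1
        _ = (t : ℝ) * Real.log (Nat.card A) := Real.log_pow _ t
        _ ≤ ((Cz : ℝ) * (N : ℝ)) * Real.log (Nat.card A) := by
            apply mul_le_mul_of_nonneg_right _ hL0
            exact_mod_cast htz
        _ = ((Cz : ℝ) * Real.log (Nat.card A)) * N := by ring
    rw [div_le_div_iff₀ (by positivity) hNR]
    calc Real.log _ * (N : ℝ) ≤ (((Cz : ℝ) * Real.log (Nat.card A)) * N) * N := by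
          apply mul_le_mul_of_nonneg_right hlog (le_of_lt hNR)
      _ = (Cz : ℝ) * Real.log (Nat.card A) * (N : ℝ) ^ 2 := by ring

end Nivat
end

section
/- (Fine–Wilf, sharpness) For each n ∈ ℕ, there exists a finite word w of length 2n+1 over {0,1} that admits two distinct extensions to periodic sequences ℕ → {0,1}, one of period n+1 and one of period n+2. In particular, 2p−2 consecutive entries are necessary in general to determine a sequence of period at most p = n+2. -/
lemma fw_key (m i : ℕ) (h : i < 2 * m) :
    (i < m ∧ i % m = i) ∨ (m ≤ i ∧ i % m = i - m) := by
  rcases Nat.lt_or_ge i m with h' | h'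
  · exact Or.inl ⟨h', Nat.mod_eq_of_lt h'⟩
  · refine Or.inr ⟨h', ?_⟩
    rw [Nat.mod_eq_sub_mod h', Nat.mod_eq_of_lt]; omega

/-- **Sharpness of the Fine–Wilf bound.** For each `n`, the word
`w = 0^n 1 0^n` of length `2n+1` admits two distinct extensions to periodic
sequences `ℕ → {0,1}`, one of period `n+1` and one of period `n+2`. -/
theorem fine_wilf_sharp (n : ℕ) :
    ∃ f g : ℕ → Fin 2, f ≠ g ∧
      (∀ i : ℕ, f (i + (n + 1)) = f i) ∧
      (∀ i : ℕ, g (i + (n + 2)) = g i) ∧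
      (∀ i : ℕ, i < 2 * n + 1 → f i = g i) ∧
      (∀ i : ℕ, i < 2 * n + 1 → f i = if i = n then 1 else 0) := by
  refine ⟨fun i => if i % (n+1) = n then 1 else 0,
          fun i => if i % (n+2) = n then 1 else 0, ?_, ?_, ?_, ?_, ?_⟩
  · intro h
    have this' := congrFun h (2*n+1)
    have h1 : (2*n+1) % (n+1) = n := by
      rcases fw_key (n+1) (2*n+1) (by omega) with ⟨h', e⟩ | ⟨h', e⟩ <;> rw [e] <;> omega
    have h2 : (2*n+1) % (n+2) ≠ n := by
      rcases fw_key (n+2) (2*n+1) (by omega) with ⟨h', e⟩ | ⟨h', e⟩ <;> rw [e] <;> omega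
    simp only [h1, h2, if_true, if_false, if_neg h2] at this'
    simp at this'
  · intro i; simp [Nat.add_mod_right]
  · intro i; simp [Nat.add_mod_right]
  · intro i hi
    have h1 : i % (n+1) = n ↔ i = n := by
      rcases fw_key (n+1) i (by omega) with ⟨h', e⟩ | ⟨h', e⟩ <;> rw [e] <;> omega
    have h2 : i % (n+2) = n ↔ i = n := by
      rcases fw_key (n+2) i (by omega) with ⟨h', e⟩ | ⟨h', e⟩ <;> rw [e] <;> omega
    simp [h1, h2]
  · intro i hi
    have h1 : i % (n+1) = n ↔ i = n := by
      rcases fw_key (n+1) i (by omega) with ⟨h', e⟩ | ⟨h', e⟩ <;> rw [e] <;> omega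
    simp [h1]
end

section
/- Suppose η : ℤ² → A is aperiodic and there exist n, k with P_η(R_{n,k}) ≤ nk/2. Then there exists an η-generating set S ⊂ R_{n,k} such that (i) D_η(S) ≤ −|S|/2, (ii) for every boundary edge w of S, D_η(S \ w) ≥ D_η(S) + ⌈|w ∩ S|/2⌉, and (iii) every nonempty proper convex subset T ⊂ S satisfies D_η(T) > D_η(S). -/
open Classical

namespace Nivat

section Aux

variable {A : Type*} [Finite A]

lemma e_inj : Function.Injective e := by
  intro a b h
  have h1 : (a.1 : ℝ) = (b.1 : ℝ) := congrArg Prod.fst h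
  have h2 : (a.2 : ℝ) = (b.2 : ℝ) := congrArg Prod.snd h
  exact Prod.ext (by exact_mod_cast h1) (by exact_mod_cast h2)

lemma res_pat (η : ℤ × ℤ → A) {T S : Finset (ℤ × ℤ)} (h : T ⊆ S) (u : ℤ × ℤ) :
    res h (pat η S u) = pat η T u := rfl

lemma range_pat_finite (η : ℤ × ℤ → A) (S : Finset (ℤ × ℤ)) :
    (Set.range (pat η S)).Finite :=
  Set.toFinite _

lemma pc_pos (η : ℤ × ℤ → A) (S : Finset (ℤ × ℤ)) : 0 < Pc η S := by
  rw [Pc, Set.ncard_pos (range_pat_finite η S)]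
  exact ⟨pat η S 0, 0, rfl⟩

lemma range_pat_eq_image (η : ℤ × ℤ → A) {T S : Finset (ℤ × ℤ)} (h : T ⊆ S) :
    Set.range (pat η T) = res h '' Set.range (pat η S) := by
  ext γ
  constructor
  · rintro ⟨u, rfl⟩
    exact ⟨pat η S u, ⟨u, rfl⟩, res_pat η h u⟩
  · rintro ⟨β, ⟨u, rfl⟩, rfl⟩
    exact ⟨u, (res_pat η h u).symm⟩

lemma pc_mono (η : ℤ × ℤ → A) {T S : Finset (ℤ × ℤ)} (h : T ⊆ S) :
    Pc η T ≤ Pc η S := by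
  rw [Pc, range_pat_eq_image η h]
  exact Set.ncard_image_le (range_pat_finite η S)

lemma pc_of_not_generated (η : ℤ × ℤ → A) {S : Finset (ℤ × ℤ)} {x : ℤ × ℤ}
    (hg : ¬ Generated η S x) : Pc η (S.erase x) + 1 ≤ Pc η S := by
  rw [Generated] at hg
  push_neg at hg
  obtain ⟨α, hα, hnu⟩ := hg
  obtain ⟨u, hu⟩ := hα
  have hQ0 : (pat η S u) ∈ Set.range (pat η S) ∧ res (eraseSub S x) (pat η S u) = α :=
    ⟨⟨u, rfl⟩, by rw [res_pat]; exact hu⟩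
  have hex : ∃ γ : S → A, (γ ∈ Set.range (pat η S) ∧ res (eraseSub S x) γ = α) ∧
      γ ≠ pat η S u := by
    by_contra hcon
    push_neg at hcon
    exact hnu ⟨pat η S u, hQ0, fun γ hγ => hcon γ hγ⟩
  obtain ⟨γ, ⟨hγmem, hγres⟩, hγne⟩ := hex
  have hfin := range_pat_finite η S
  have himg : Set.range (pat η (S.erase x)) =
      res (eraseSub S x) '' (Set.range (pat η S) \ {γ}) := by
    rw [range_pat_eq_image η (eraseSub S x)]
    apply subset_antisymm
    · rintro β ⟨δ, hδ, rfl⟩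
      by_cases hδγ : δ = γ
      · subst hδγ
        refine ⟨pat η S u, ⟨hQ0.1, ?_⟩, ?_⟩
        · simp [hγne.symm]
        · rw [hQ0.2, hγres]
      · exact ⟨δ, ⟨hδ, hδγ⟩, rfl⟩
    · rintro β ⟨δ, hδ, rfl⟩
      exact ⟨δ, hδ.1, rfl⟩
  have h1 : Pc η (S.erase x) ≤ (Set.range (pat η S) \ {γ}).ncard := by
    rw [Pc, himg]
    exact Set.ncard_image_le hfin.diff
  have h2 : (Set.range (pat η S) \ {γ}).ncard + 1 = Pc η S :=
    Set.ncard_diff_singleton_add_one hγmem hfin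
  omega

lemma lattice_of_hull {T : Finset (ℤ × ℤ)} {P : Set (ℝ × ℝ)} (hP : Convex ℝ P)
    (hTP : ∀ s ∈ T, e s ∈ P) {z : ℤ × ℤ}
    (hz : e z ∈ convexHull ℝ (e '' (T : Set (ℤ × ℤ)))) : e z ∈ P := by
  refine convexHull_min ?_ hP hz
  rintro y ⟨s, hs, rfl⟩
  exact hTP s hs

lemma rect_convex (n k : ℕ) : IsConvexSet (Rect n k) := by
  intro p hp
  have hmem : ∀ s ∈ Rect n k, 0 ≤ s.1 ∧ s.1 ≤ (n : ℤ) - 1 ∧ 0 ≤ s.2 ∧ s.2 ≤ (k : ℤ) - 1 := by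
    intro s hs
    rw [Rect, Finset.mem_product, Finset.mem_Ico, Finset.mem_Ico] at hs
    omega
  have hfst := (LinearMap.fst ℝ ℝ ℝ).isLinear
  have hsnd := (LinearMap.snd ℝ ℝ ℝ).isLinear
  have h1 : e p ∈ {w : ℝ × ℝ | (LinearMap.fst ℝ ℝ ℝ) w ∈ Set.Ici (0 : ℝ)} :=
    lattice_of_hull (convex_halfSpace_ge hfst 0)
      (fun s hs => by
        show (0 : ℝ) ≤ ((s.1 : ℤ) : ℝ)
        exact_mod_cast (hmem s hs).1) hp
  have h2 : e p ∈ {w : ℝ × ℝ | (LinearMap.fst ℝ ℝ ℝ) w ≤ (((n : ℤ) - 1 : ℤ) : ℝ)} :=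
    lattice_of_hull (convex_halfSpace_le hfst _)
      (fun s hs => by
        show ((s.1 : ℤ) : ℝ) ≤ (((n : ℤ) - 1 : ℤ) : ℝ)
        exact Int.cast_le.mpr (hmem s hs).2.1) hp
  have h3 : e p ∈ {w : ℝ × ℝ | (LinearMap.snd ℝ ℝ ℝ) w ∈ Set.Ici (0 : ℝ)} :=
    lattice_of_hull (convex_halfSpace_ge hsnd 0)
      (fun s hs => by
        show (0 : ℝ) ≤ ((s.2 : ℤ) : ℝ)
        exact_mod_cast (hmem s hs).2.2.1) hp
  have h4 : e p ∈ {w : ℝ × ℝ | (LinearMap.snd ℝ ℝ ℝ) w ≤ (((k : ℤ) - 1 : ℤ) : ℝ)} :=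
    lattice_of_hull (convex_halfSpace_le hsnd _)
      (fun s hs => by
        show ((s.2 : ℤ) : ℝ) ≤ (((k : ℤ) - 1 : ℤ) : ℝ)
        exact Int.cast_le.mpr (hmem s hs).2.2.2) hp
  have e1 : (0 : ℝ) ≤ (p.1 : ℝ) := h1
  have e2 : (p.1 : ℝ) ≤ (((n : ℤ) - 1 : ℤ) : ℝ) := h2
  have e3 : (0 : ℝ) ≤ (p.2 : ℝ) := h3
  have e4 : (p.2 : ℝ) ≤ (((k : ℤ) - 1 : ℤ) : ℝ) := h4
  have i1 : (0 : ℤ) ≤ p.1 := by exact_mod_cast e1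
  have i2 : p.1 ≤ (n : ℤ) - 1 := by exact_mod_cast e2
  have i3 : (0 : ℤ) ≤ p.2 := by exact_mod_cast e3
  have i4 : p.2 ≤ (k : ℤ) - 1 := by exact_mod_cast e4
  rw [Rect, Finset.mem_product, Finset.mem_Ico, Finset.mem_Ico]
  omega

lemma erase_convex {S : Finset (ℤ × ℤ)} {x : ℤ × ℤ} (hS : IsConvexSet S)
    (hx : IsExtremePt S x) : IsConvexSet (S.erase x) := by
  intro z hz
  have hsub : (e '' ((S.erase x : Finset (ℤ × ℤ)) : Set (ℤ × ℤ))) ⊆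
      e '' (S : Set (ℤ × ℤ)) :=
    Set.image_mono (by exact_mod_cast eraseSub S x)
  have hzS : z ∈ S := hS z ((convexHull_mono hsub) hz)
  rw [Finset.mem_erase]
  refine ⟨?_, hzS⟩
  rintro rfl
  rw [IsExtremePt, (convex_convexHull ℝ _).mem_extremePoints_iff_mem_diff_convexHull_diff] at hx
  apply hx.2
  refine (convexHull_mono ?_) hz
  rintro y ⟨s, hs, rfl⟩
  rw [Finset.mem_coe, Finset.mem_erase] at hs
  exact ⟨subset_convexHull ℝ _ ⟨s, hs.2, rfl⟩,
    fun hes => hs.1 (e_inj hes)⟩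

lemma sdiff_edge_convex {S : Finset (ℤ × ℤ)} {p q : ℤ × ℤ} (hS : IsConvexSet S)
    (hedge : IsEdge S p q) : IsConvexSet (S \ edgePts S p q) := by
  obtain ⟨hpq, hp, hq, ℓ, c, hle, hset⟩ := hedge
  intro z hz
  have hsub : (e '' ((S \ edgePts S p q : Finset (ℤ × ℤ)) : Set (ℤ × ℤ))) ⊆
      e '' (S : Set (ℤ × ℤ)) :=
    Set.image_mono (by exact_mod_cast sdiffSub S (edgePts S p q))
  have hzS : z ∈ S := hS z ((convexHull_mono hsub) hz)
  have hlt : ∀ s ∈ S \ edgePts S p q, ℓ (e s) < c := by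
    intro s hs
    rw [Finset.mem_sdiff] at hs
    have hsh : e s ∈ convexHull ℝ (e '' (S : Set (ℤ × ℤ))) :=
      subset_convexHull ℝ _ ⟨s, by exact_mod_cast hs.1, rfl⟩
    rcases lt_or_eq_of_le (hle _ hsh) with h | h
    · exact h
    · exfalso
      apply hs.2
      have : e s ∈ segment ℝ (e p) (e q) := by
        rw [← hset]; exact ⟨hsh, h⟩
      rw [edgePts, Finset.mem_filter]
      exact ⟨hs.1, this⟩
  have hzlt : ℓ (e z) < c :=
    lattice_of_hull (convex_halfSpace_lt ℓ.isLinear c) hlt hz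
  rw [Finset.mem_sdiff]
  refine ⟨hzS, ?_⟩
  intro hzw
  rw [edgePts, Finset.mem_filter] at hzw
  have : ℓ (e z) = c := by
    have := hzw.2
    rw [← hset] at this
    exact this.2
  linarith

end Aux

end Nivat

namespace Nivat

/-- If `η` is aperiodic and `P_η(R_{n,k}) ≤ nk/2` for some `n, k`, then there
is an `η`-generating set `S ⊆ R_{n,k}` with (i) `D_η(S) ≤ -|S|/2`, (ii) for
every boundary edge `w` of `S`, `D_η(S \ w) ≥ D_η(S) + ⌈|w ∩ S|/2⌉`, and
(iii) every nonempty proper convex subset of `S` has strictly larger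
discrepancy. -/
theorem statement14 {A : Type*} [Finite A] (η : ℤ × ℤ → A) (hap : Aperiodic η)
    (n k : ℕ) (hn : 1 ≤ n) (hk : 1 ≤ k)
    (hP : 2 * Pc η (Rect n k) ≤ n * k) :
    ∃ S : Finset (ℤ × ℤ), S ⊆ Rect n k ∧ Generating η S ∧
      2 * Dc η S ≤ -(S.card : ℤ) ∧
      (∀ p q : ℤ × ℤ, IsEdge S p q →
        Dc η S + ((((edgePts S p q).card + 1) / 2 : ℕ) : ℤ) ≤ Dc η (S \ edgePts S p q)) ∧
      (∀ T ⊆ S, T ≠ S → T.Nonempty → IsConvexSet T → Dc η S < Dc η T) := by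
  classical
  set φ : Finset (ℤ × ℤ) → ℤ := fun T => 2 * Dc η T + (T.card : ℤ) with hφ
  set C : Finset (Finset (ℤ × ℤ)) := (Rect n k).powerset.filter
    (fun T => T.Nonempty ∧ IsConvexSet T ∧ φ T ≤ 0) with hC
  have hrectcard : (Rect n k).card = n * k := by
    rw [Rect, Finset.card_product, Int.card_Ico, Int.card_Ico]
    simp
  have hrectC : Rect n k ∈ C := by
    rw [hC, Finset.mem_filter, Finset.mem_powerset]
    refine ⟨Finset.Subset.refl _, ?_, rect_convex n k, ?_⟩
    · refine ⟨(0, 0), ?_⟩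
      rw [Rect, Finset.mem_product, Finset.mem_Ico, Finset.mem_Ico]
      constructor <;> constructor <;> omega
    · rw [hφ]
      simp only [Dc, hrectcard]
      omega
  have hCne : C.Nonempty := ⟨_, hrectC⟩
  obtain ⟨S₀, hS₀C, hS₀min⟩ := Finset.exists_min_image C φ hCne
  have hC'ne : (C.filter (fun T => φ T ≤ φ S₀)).Nonempty :=
    ⟨S₀, by rw [Finset.mem_filter]; exact ⟨hS₀C, le_refl _⟩⟩
  obtain ⟨S, hSC', hSmin⟩ := Finset.exists_min_image _ Finset.card hC'ne
  rw [Finset.mem_filter] at hSC'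
  obtain ⟨hSC, hSφ₀⟩ := hSC'
  have hmin : ∀ T ∈ C, φ S ≤ φ T := fun T hT => le_trans hSφ₀ (hS₀min T hT)
  have hcardmin : ∀ T ∈ C, φ T ≤ φ S → S.card ≤ T.card := by
    intro T hT hTφ
    exact hSmin T (by rw [Finset.mem_filter]; exact ⟨hT, le_trans hTφ hSφ₀⟩)
  rw [hC, Finset.mem_filter, Finset.mem_powerset] at hSC
  obtain ⟨hSrect, hSne, hSconv, hSφ⟩ := hSC
  -- condition (iii)
  have hiii : ∀ T ⊆ S, T ≠ S → T.Nonempty → IsConvexSet T → Dc η S < Dc η T := by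
    intro T hTS hTne hTnonempty hTconv
    by_contra hcon
    push_neg at hcon
    have hss : T ⊂ S := Finset.ssubset_iff_subset_ne.mpr ⟨hTS, hTne⟩
    have hlt : T.card < S.card := Finset.card_lt_card hss
    have hφT : φ T < φ S := by
      rw [hφ]; simp only
      omega
    have hTC : T ∈ C := by
      rw [hC, Finset.mem_filter, Finset.mem_powerset]
      exact ⟨hTS.trans hSrect, hTnonempty, hTconv, by omega⟩
    exact absurd (hmin T hTC) (by omega)
  -- extreme points are generated
  have hgen : ∀ x ∈ S, IsExtremePt S x → Generated η S x := by
    intro x hxS hxext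
    by_contra hg
    have hp1 : 0 < Pc η S := pc_pos η S
    have hcard2 : 2 ≤ S.card := by
      have : 2 * Dc η S + (S.card : ℤ) ≤ 0 := hSφ
      rw [Dc] at this
      omega
    have hce : (S.erase x).card = S.card - 1 := Finset.card_erase_of_mem hxS
    have hene : (S.erase x).Nonempty := by
      rw [← Finset.card_pos]
      omega
    have heneq : S.erase x ≠ S := by
      intro h
      have := Finset.notMem_erase x S
      rw [h] at this
      exact this hxS
    have hdlt : Dc η S < Dc η (S.erase x) :=
      hiii _ (eraseSub S x) heneq hene (erase_convex hSconv hxext)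
    have hpc : Pc η (S.erase x) + 1 ≤ Pc η S := pc_of_not_generated η hg
    rw [Dc, Dc, hce] at hdlt
    omega
  refine ⟨S, hSrect, ⟨⟨hSne, hSconv, hgen⟩, hiii⟩, ?_, ?_, hiii⟩
  · rw [hφ] at hSφ
    simp only at hSφ
    omega
  · intro p q hedge
    set w : Finset (ℤ × ℤ) := edgePts S p q with hw
    have hwS : w ⊆ S := Finset.filter_subset _ _
    have hwcard : w.card ≤ S.card := Finset.card_le_card hwS
    have hTcard : (S \ w).card = S.card - w.card := Finset.card_sdiff_of_subset hwS
    have hφS : 2 * Dc η S + (S.card : ℤ) ≤ 0 := hSφ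
    by_cases hTe : S \ w = ∅
    · have hwall : w = S :=
        Finset.Subset.antisymm hwS (Finset.sdiff_eq_empty_iff_subset.mp hTe)
      have hdem : (1 : ℤ) ≤ Dc η (S \ w) := by
        rw [hTe, Dc]
        have := pc_pos η (∅ : Finset (ℤ × ℤ))
        simp only [Finset.card_empty]
        omega
      have hcardw : w.card = S.card := by rw [hwall]
      omega
    · have hTne : (S \ w).Nonempty := Finset.nonempty_of_ne_empty hTe
      have hTconv : IsConvexSet (S \ w) := sdiff_edge_convex hSconv hedge
      have hwne : p ∈ w := by
        rw [hw, edgePts, Finset.mem_filter]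
        exact ⟨hedge.2.1, left_mem_segment ℝ _ _⟩
      have hwpos : 1 ≤ w.card := Finset.card_pos.mpr ⟨p, hwne⟩
      by_cases hφT : φ (S \ w) ≤ 0
      · have hTC : S \ w ∈ C := by
          rw [hC, Finset.mem_filter, Finset.mem_powerset]
          exact ⟨(sdiffSub S w).trans hSrect, hTne, hTconv, hφT⟩
        have := hmin _ hTC
        rw [hφ] at this
        simp only at this
        omega
      · push_neg at hφT
        rw [hφ] at hφT
        simp only at hφT
        omega


end Nivat
end

section
/- Suppose η : ℤ² → A is aperiodic, P_η(R_{n,k}) ≤ nk/2 for some n,k, and S is a strong η-generating set. Then for every boundary edge w of S, the number of distinct η-colorings of S \ w that extend non-uniquely to η-colorings of S is at most ⌊|w ∩ S|/2⌋. -/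
open Classical

namespace Nivat

/-- If `η` is aperiodic with `P_η(R_{n,k}) ≤ nk/2` and `S` is a strong
`η`-generating set, then for every boundary edge `w` of `S`, at most
`⌊|w ∩ S|/2⌋` distinct `η`-colorings of `S \ w` extend non-uniquely to
`η`-colorings of `S`. -/
theorem statement15 {A : Type*} [Finite A] (η : ℤ × ℤ → A) (hap : Aperiodic η)
    (n k : ℕ) (hn : 1 ≤ n) (hk : 1 ≤ k)
    (hP : 2 * Pc η (Rect n k) ≤ n * k)
    (S : Finset (ℤ × ℤ)) (hsub : S ⊆ Rect n k) (hgen : Generating η S)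
    (hstrong1 : 2 * Dc η S ≤ -(S.card : ℤ))
    (hstrong2 : ∀ p q : ℤ × ℤ, IsEdge S p q →
      Dc η S + ((((edgePts S p q).card + 1) / 2 : ℕ) : ℤ) ≤ Dc η (S \ edgePts S p q))
    (p q : ℤ × ℤ) (hedge : IsEdge S p q) :
    Set.ncard {α : (S \ edgePts S p q : Finset (ℤ × ℤ)) → A |
        ExtendsNonUniquely η (sdiffSub S (edgePts S p q)) α}
      ≤ (edgePts S p q).card / 2 := by
  classical
  set w : Finset (ℤ × ℤ) := edgePts S p q with hwdef
  have hwS : w ⊆ S := Finset.filter_subset _ _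
  have hres : ∀ u, res (sdiffSub S w) (pat η S u) = pat η (S \ w) u := fun u => rfl
  let s : ({x // x ∈ S \ w} → A) → ({x // x ∈ S} → A) := fun α =>
    if h : ∃ u, pat η (S \ w) u = α then pat η S h.choose else pat η S 0
  have hs1 : ∀ α ∈ Set.range (pat η (S \ w)),
      s α ∈ Set.range (pat η S) ∧ res (sdiffSub S w) (s α) = α := by
    rintro α ⟨u, rfl⟩
    have h : ∃ u', pat η (S \ w) u' = pat η (S \ w) u := ⟨u, rfl⟩
    simp only [s, dif_pos h]
    exact ⟨⟨h.choose, rfl⟩, (hres h.choose).trans h.choose_spec⟩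
  have ht0 : ∀ α ∈ {α : (S \ w : Finset (ℤ × ℤ)) → A |
      ExtendsNonUniquely η (sdiffSub S w) α},
      ∃ β, β ∈ Set.range (pat η S) ∧ res (sdiffSub S w) β = α ∧ β ≠ s α := by
    rintro α ⟨β₁, β₂, hb1, hb2, hne, hr1, hr2⟩
    by_cases h : β₁ = s α
    · exact ⟨β₂, hb2, hr2, fun hc => hne (h.trans hc.symm)⟩
    · exact ⟨β₁, hb1, hr1, h⟩
  let t : ({x // x ∈ S \ w} → A) → ({x // x ∈ S} → A) := fun α =>
    if h : ∃ β, β ∈ Set.range (pat η S) ∧ res (sdiffSub S w) β = α ∧ β ≠ s α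
    then h.choose else pat η S 0
  have ht1 : ∀ α ∈ {α : (S \ w : Finset (ℤ × ℤ)) → A |
      ExtendsNonUniquely η (sdiffSub S w) α},
      t α ∈ Set.range (pat η S) ∧ res (sdiffSub S w) (t α) = α ∧ t α ≠ s α := by
    intro α hα
    have h := ht0 α hα
    simp only [t, dif_pos h]
    exact h.choose_spec
  set NU := {α : (S \ w : Finset (ℤ × ℤ)) → A |
      ExtendsNonUniquely η (sdiffSub S w) α} with hNU
  have hfin : (Set.range (pat η S)).Finite := Set.toFinite _
  have hmaps : Set.MapsTo t NU (Set.range (pat η S) \ s '' Set.range (pat η (S \ w))) := by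
    intro α hα
    obtain ⟨h1, h2, h3⟩ := ht1 α hα
    refine ⟨h1, ?_⟩
    rintro ⟨α', hα', heq⟩
    obtain ⟨_, hr'⟩ := hs1 α' hα'
    have : α' = α := by rw [← hr', heq, h2]
    exact h3 (this ▸ heq.symm)
  have hinj : Set.InjOn t NU := by
    intro a ha b hb hab
    have h2a := (ht1 a ha).2.1
    have h2b := (ht1 b hb).2.1
    rw [← h2a, ← h2b, hab]
  have hsinj : Set.InjOn s (Set.range (pat η (S \ w))) := by
    intro a ha b hb hab
    rw [← (hs1 a ha).2, ← (hs1 b hb).2, hab]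
  have h1 : NU.ncard ≤ (Set.range (pat η S) \ s '' Set.range (pat η (S \ w))).ncard :=
    Set.ncard_le_ncard_of_injOn t hmaps hinj (hfin.diff)
  have h2 : (Set.range (pat η S) \ s '' Set.range (pat η (S \ w))).ncard
      = (Set.range (pat η S)).ncard - (s '' Set.range (pat η (S \ w))).ncard :=
    Set.ncard_diff (fun β hβ => by obtain ⟨α, hα, rfl⟩ := hβ; exact (hs1 α hα).1)
  have h3 : (s '' Set.range (pat η (S \ w))).ncard = Pc η (S \ w) :=
    Set.ncard_image_of_injOn hsinj
  have h4 : (s '' Set.range (pat η (S \ w))).ncard ≤ (Set.range (pat η S)).ncard :=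
    Set.ncard_le_ncard (fun β hβ => by obtain ⟨α, hα, rfl⟩ := hβ; exact (hs1 α hα).1) hfin
  have hmain : NU.ncard + Pc η (S \ w) ≤ Pc η S := by
    rw [← h3]
    rw [Pc]
    omega
  have hD := hstrong2 p q hedge
  rw [Dc, Dc] at hD
  have hcard : ((S \ w).card : ℤ) = (S.card : ℤ) - (w.card : ℤ) := by
    rw [Finset.card_sdiff_of_subset hwS]
    have := Finset.card_le_card hwS
    omega
  have hhalf : (w.card + 1) / 2 + w.card / 2 = w.card := by omega
  rw [hcard] at hD
  have hcast : (NU.ncard : ℤ) + (Pc η (S \ w) : ℤ) ≤ (Pc η S : ℤ) := by exact_mod_cast hmain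
  have e1 : Pc η (S \ edgePts S p q) = Pc η (S \ w) := rfl
  have e2 : (edgePts S p q).card = w.card := rfl
  have e3 : (Set.range (pat η S)).ncard = Pc η S := rfl
  have hfinal : (NU.ncard : ℤ) ≤ ((w.card / 2 : ℕ) : ℤ) := by
    have h5 : (((w.card + 1) / 2 : ℕ) : ℤ) + ((w.card / 2 : ℕ) : ℤ) = (w.card : ℤ) := by
      exact_mod_cast hhalf
    omega
  exact_mod_cast hfinal

end Nivat
end

section
/- Let η : ℤ² → A satisfy P_η(R_{n,k}) ≤ nk for some n, k, and let S ⊆ R_{n,k} be an η-generating set. If ℓ is a one-sided η-nonexpansive direction (a directed rational line through the origin), then S has a boundary edge parallel to ℓ; in particular, some translate of ℓ meets R_{n,k} in at least two lattice points. -/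
open Classical

section Aux


lemma face_subset (V : Finset (ℝ × ℝ)) (L : (ℝ × ℝ) →ₗ[ℝ] ℝ) (c : ℝ)
    (hb : ∀ v ∈ V, L v ≤ c) {x : ℝ × ℝ}
    (hx : x ∈ convexHull ℝ (V : Set (ℝ × ℝ))) (hxc : L x = c) :
    x ∈ convexHull ℝ {v : ℝ × ℝ | v ∈ (V : Set (ℝ × ℝ)) ∧ L v = c} := by
  classical
  rw [Finset.convexHull_eq] at hx
  obtain ⟨w, hw0, hw1, hwx⟩ := hx
  rw [Finset.centerMass_eq_of_sum_1 _ _ hw1] at hwx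
  simp only [id] at hwx
  have hLx : ∑ y ∈ V, w y * L y = c := by
    have := congrArg L hwx
    simpa [map_sum, map_smul, smul_eq_mul, hxc] using this
  have hzero : ∀ y ∈ V, w y * (c - L y) = 0 := by
    have hsum : ∑ y ∈ V, w y * (c - L y) = 0 := by
      have : ∑ y ∈ V, w y * (c - L y) = (∑ y ∈ V, w y) * c - ∑ y ∈ V, w y * L y := by
        rw [Finset.sum_mul, ← Finset.sum_sub_distrib]; exact Finset.sum_congr rfl (fun y _ => by ring)
      rw [this, hw1, hLx]; ring
    intro y hy
    have := (Finset.sum_eq_zero_iff_of_nonneg (fun y hy => by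
      have := hb y hy
      have := hw0 y hy
      nlinarith)).1 hsum
    exact this y hy
  set V' := V.filter (fun v => L v = c) with hV'
  have hsupp : ∀ y ∈ V, w y ≠ 0 → L y = c := by
    intro y hy hne
    have := hzero y hy
    rcases mul_eq_zero.1 this with h | h
    · exact absurd h hne
    · linarith
  have hs1 : ∑ y ∈ V', w y = 1 := by
    rw [hV', Finset.sum_filter_of_ne (fun y hy hne => hsupp y hy hne), hw1]
  have hs2 : ∑ y ∈ V', w y • y = x := by
    rw [hV', Finset.sum_filter_of_ne (fun y hy hne => hsupp y hy (by
      intro h0; apply hne; rw [h0, zero_smul])), hwx]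
  have hmem : x ∈ convexHull ℝ (V' : Set (ℝ × ℝ)) := by
    rw [Finset.convexHull_eq]
    exact ⟨w, fun y hy => hw0 y (Finset.mem_filter.1 hy).1, hs1, by
      rw [Finset.centerMass_eq_of_sum_1 _ _ hs1]; simpa using hs2⟩
  refine convexHull_mono ?_ hmem
  intro v hv
  have := Finset.mem_coe.1 hv
  rw [hV', Finset.mem_filter] at this
  exact ⟨this.1, this.2⟩

end Aux

namespace Nivat
noncomputable section AuxN


def LF (d : ℤ × ℤ) : (ℝ × ℝ) →ₗ[ℝ] ℝ :=
  (d.2 : ℝ) • LinearMap.fst ℝ ℝ ℝ - (d.1 : ℝ) • LinearMap.snd ℝ ℝ ℝ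

lemma LF_apply (d : ℤ × ℤ) (v : ℝ × ℝ) : LF d v = d.2 * v.1 - d.1 * v.2 := by
  simp [LF]

lemma LF_e (d s : ℤ × ℤ) : LF d (e s) = ((d.2 * s.1 - d.1 * s.2 : ℤ) : ℝ) := by
  simp only [LF_apply, e]
  push_cast
  ring

-- injectivity of (f,g)
lemma fg_inj {d u v : ℤ × ℤ} (hd : d ≠ 0)
    (hf : d.1 * u.2 - d.2 * u.1 = d.1 * v.2 - d.2 * v.1)
    (hg : d.1 * u.1 + d.2 * u.2 = d.1 * v.1 + d.2 * v.2) : u = v := by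
  have hd2 : 0 < d.1 * d.1 + d.2 * d.2 := by
    rcases lt_or_eq_of_le (by nlinarith [sq_nonneg d.1, sq_nonneg d.2] : (0:ℤ) ≤ d.1 * d.1 + d.2 * d.2) with h | h
    · exact h
    · exfalso
      have h1 : d.1 = 0 := by nlinarith
      have h2 : d.2 = 0 := by nlinarith
      exact hd (Prod.ext h1 h2)
  have h1 : u.1 = v.1 := by nlinarith [sq_nonneg (u.1 - v.1), sq_nonneg (u.2 - v.2)]
  have h2 : u.2 = v.2 := by nlinarith [sq_nonneg (u.1 - v.1), sq_nonneg (u.2 - v.2)]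
  exact Prod.ext h1 h2

lemma cross_vanish {d a b : ℤ × ℤ} (hd : d ≠ 0)
    (ha : d.1 * a.2 = d.2 * a.1) (hb : d.1 * b.2 = d.2 * b.1) :
    a.1 * b.2 = a.2 * b.1 := by
  by_cases h1 : d.1 = 0
  · have h2 : d.2 ≠ 0 := fun h2 => hd (Prod.ext h1 h2)
    have ha1 : a.1 = 0 := by
      have : d.2 * a.1 = 0 := by rw [← ha, h1]; ring
      exact (mul_eq_zero.1 this).resolve_left h2
    have hb1 : b.1 = 0 := by
      have : d.2 * b.1 = 0 := by rw [← hb, h1]; ring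
      exact (mul_eq_zero.1 this).resolve_left h2
    rw [ha1, hb1]; ring
  · apply mul_left_cancel₀ h1
    calc d.1 * (a.1 * b.2) = a.1 * (d.1 * b.2) := by ring
    _ = a.1 * (d.2 * b.1) := by rw [hb]
    _ = (d.2 * a.1) * b.1 := by ring
    _ = (d.1 * a.2) * b.1 := by rw [ha]
    _ = d.1 * (a.2 * b.1) := by ring

lemma exists_edge {S : Finset (ℤ × ℤ)} {d : ℤ × ℤ} (hd : d ≠ 0) (c : ℤ)
    (hc : ∀ y ∈ S, c ≤ d.1 * y.2 - d.2 * y.1)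
    {u v : ℤ × ℤ} (hu : u ∈ S) (hv : v ∈ S) (huv : u ≠ v)
    (hfu : d.1 * u.2 - d.2 * u.1 = c) (hfv : d.1 * v.2 - d.2 * v.1 = c) :
    ∃ p q : ℤ × ℤ, IsOrientedEdge S p q ∧ PosParallel (q - p) d := by
  classical
  have hmemF : ∀ y, y ∈ S.filter (fun y => d.1 * y.2 - d.2 * y.1 = c) ↔
      y ∈ S ∧ d.1 * y.2 - d.2 * y.1 = c := fun y => Finset.mem_filter
  set F : Finset (ℤ × ℤ) := S.filter (fun y => d.1 * y.2 - d.2 * y.1 = c) with hFdef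
  have huF : u ∈ F := (hmemF u).2 ⟨hu, hfu⟩
  have hvF : v ∈ F := (hmemF v).2 ⟨hv, hfv⟩
  obtain ⟨p, hpF, hpmin⟩ := F.exists_min_image (fun y => d.1 * y.1 + d.2 * y.2) ⟨u, huF⟩
  obtain ⟨q, hqF, hqmax⟩ := F.exists_max_image (fun y => d.1 * y.1 + d.2 * y.2) ⟨u, huF⟩
  obtain ⟨hpS, hfp⟩ := (hmemF p).1 hpF
  obtain ⟨hqS, hfq⟩ := (hmemF q).1 hqF
  have hguv : d.1 * u.1 + d.2 * u.2 ≠ d.1 * v.1 + d.2 * v.2 := by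
    intro h
    exact huv (fg_inj hd (by linarith) h)
  have hgpq : d.1 * p.1 + d.2 * p.2 < d.1 * q.1 + d.2 * q.2 := by
    rcases lt_or_gt_of_ne hguv with h | h
    · have h1 := hpmin u huF; have h2 := hqmax v hvF; linarith
    · have h1 := hpmin v hvF; have h2 := hqmax u huF; linarith
  have hpq : p ≠ q := by intro h; rw [h] at hgpq; exact lt_irrefl _ hgpq
  have hfw : d.1 * (q.2 - p.2) = d.2 * (q.1 - p.1) := by linear_combination hfq - hfp
  have hdw : 0 < d.1 * (q.1 - p.1) + d.2 * (q.2 - p.2) := by linarith [hgpq]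
  have hww : 0 < (q.1 - p.1) * (q.1 - p.1) + (q.2 - p.2) * (q.2 - p.2) := by
    rcases lt_or_eq_of_le (by nlinarith [sq_nonneg (q.1-p.1), sq_nonneg (q.2-p.2)] :
        (0:ℤ) ≤ (q.1 - p.1) * (q.1 - p.1) + (q.2 - p.2) * (q.2 - p.2)) with h | h
    · exact h
    · exfalso
      have h1 : q.1 = p.1 := by nlinarith
      have h2 : q.2 = p.2 := by nlinarith
      exact hpq (Prod.ext h1.symm h2.symm)
  have hpar : PosParallel (q - p) d := by
    refine ⟨d.1 * (q.1 - p.1) + d.2 * (q.2 - p.2),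
      (q.1 - p.1) * (q.1 - p.1) + (q.2 - p.2) * (q.2 - p.2), hdw, hww, ?_⟩
    apply Prod.ext <;>
      simp only [Prod.smul_fst, Prod.smul_snd, Prod.fst_sub, Prod.snd_sub, smul_eq_mul]
    · linear_combination (-(q.2 - p.2)) * hfw
    · linear_combination (q.1 - p.1) * hfw
  have hsegmem : ∀ s ∈ S, d.1 * s.2 - d.2 * s.1 = c → e s ∈ segment ℝ (e p) (e q) := by
    intro s hsS hfs
    have hsF : s ∈ F := (hmemF s).2 ⟨hsS, hfs⟩
    have hgs1 := hpmin s hsF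
    have hgs2 := hqmax s hsF
    have hcross1 : d.1 * (s.2 - p.2) = d.2 * (s.1 - p.1) := by linear_combination hfs - hfp
    have hab := cross_vanish hd (a := (s.1 - p.1, s.2 - p.2)) (b := (q.1 - p.1, q.2 - p.2))
      (by simpa using hcross1) (by simpa using hfw)
    simp only at hab
    have hkey1 : ((d.1 * q.1 + d.2 * q.2) - (d.1 * p.1 + d.2 * p.2)) * (s.1 - p.1)
        = ((d.1 * s.1 + d.2 * s.2) - (d.1 * p.1 + d.2 * p.2)) * (q.1 - p.1) := by
      linear_combination d.2 * hab
    have hkey2 : ((d.1 * q.1 + d.2 * q.2) - (d.1 * p.1 + d.2 * p.2)) * (s.2 - p.2)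
        = ((d.1 * s.1 + d.2 * s.2) - (d.1 * p.1 + d.2 * p.2)) * (q.2 - p.2) := by
      linear_combination (-d.1) * hab
    set D : ℝ := (((d.1 * q.1 + d.2 * q.2) - (d.1 * p.1 + d.2 * p.2) : ℤ) : ℝ) with hDdef
    set N : ℝ := (((d.1 * s.1 + d.2 * s.2) - (d.1 * p.1 + d.2 * p.2) : ℤ) : ℝ) with hNdef
    have hD : 0 < D := by
      rw [hDdef]; exact_mod_cast (by linarith :
        (0:ℤ) < (d.1 * q.1 + d.2 * q.2) - (d.1 * p.1 + d.2 * p.2))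
    have hN0 : 0 ≤ N := by
      rw [hNdef]; exact_mod_cast (by linarith :
        (0:ℤ) ≤ (d.1 * s.1 + d.2 * s.2) - (d.1 * p.1 + d.2 * p.2))
    have hND : N ≤ D := by
      rw [hNdef, hDdef]; exact_mod_cast (by linarith :
        (d.1 * s.1 + d.2 * s.2) - (d.1 * p.1 + d.2 * p.2)
          ≤ (d.1 * q.1 + d.2 * q.2) - (d.1 * p.1 + d.2 * p.2))
    have hk1R : D * ((s.1 : ℝ) - (p.1 : ℝ)) = N * ((q.1 : ℝ) - (p.1 : ℝ)) := by
      rw [hDdef, hNdef]; push_cast; exact_mod_cast congrArg (fun z : ℤ => (z : ℝ)) hkey1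
    have hk2R : D * ((s.2 : ℝ) - (p.2 : ℝ)) = N * ((q.2 : ℝ) - (p.2 : ℝ)) := by
      rw [hDdef, hNdef]; push_cast; exact_mod_cast congrArg (fun z : ℤ => (z : ℝ)) hkey2
    have hDne : D ≠ 0 := ne_of_gt hD
    refine ⟨1 - N / D, N / D, ?_, by positivity, by ring, ?_⟩
    · have : N / D ≤ 1 := (div_le_one hD).2 hND
      linarith
    · apply Prod.ext <;>
        simp only [e, Prod.smul_fst, Prod.smul_snd, Prod.fst_add, Prod.snd_add, smul_eq_mul]
      · field_simp
        linear_combination -hk1R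
      · field_simp
        linear_combination -hk2R
  have hbound : ∀ x ∈ convexHull ℝ (e '' (S : Set (ℤ × ℤ))), LF d x ≤ ((-c : ℤ) : ℝ) := by
    intro x hx
    have hsub : e '' (S : Set (ℤ × ℤ)) ⊆ {x | LF d x ≤ ((-c : ℤ) : ℝ)} := by
      rintro _ ⟨s, hsS, rfl⟩
      have := hc s hsS
      rw [Set.mem_setOf_eq, LF_e]
      exact_mod_cast (by linarith : d.2 * s.1 - d.1 * s.2 ≤ -c)
    exact convexHull_min hsub (convex_halfSpace_le (LF d).isLinear _) hx
  have hface : {x ∈ convexHull ℝ (e '' (S : Set (ℤ × ℤ))) | LF d x = ((-c : ℤ) : ℝ)}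
      = segment ℝ (e p) (e q) := by
    ext x
    constructor
    · rintro ⟨hxhull, hxc⟩
      have hco : e '' (S : Set (ℤ × ℤ)) = ((S.image e : Finset (ℝ × ℝ)) : Set (ℝ × ℝ)) := by
        rw [Finset.coe_image]
      have hface1 : x ∈ convexHull ℝ {v : ℝ × ℝ | v ∈ ((S.image e : Finset (ℝ × ℝ)) :
          Set (ℝ × ℝ)) ∧ LF d v = ((-c : ℤ) : ℝ)} := by
        refine face_subset _ _ _ ?_ ?_ hxc
        · intro w hw
          exact hbound w (subset_convexHull ℝ _ (hco ▸ hw))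
        · rw [← hco]; exact hxhull
      refine convexHull_min ?_ (convex_segment _ _) hface1
      rintro w ⟨hwmem, hwc⟩
      rw [Finset.coe_image] at hwmem
      obtain ⟨s, hsS, rfl⟩ := hwmem
      rw [LF_e] at hwc
      have hfs : d.1 * s.2 - d.2 * s.1 = c := by
        have : d.2 * s.1 - d.1 * s.2 = -c := by exact_mod_cast hwc
        linarith
      exact hsegmem s hsS hfs
    · rintro hx
      have hseg : segment ℝ (e p) (e q) ⊆ convexHull ℝ (e '' (S : Set (ℤ × ℤ))) :=
        (convex_convexHull ℝ _).segment_subset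
          (subset_convexHull ℝ _ ⟨p, hpS, rfl⟩) (subset_convexHull ℝ _ ⟨q, hqS, rfl⟩)
      refine ⟨hseg hx, ?_⟩
      obtain ⟨a, b, ha, hb, hab, rfl⟩ := hx
      have hLp : LF d (e p) = ((-c : ℤ) : ℝ) := by
        rw [LF_e]; exact_mod_cast congrArg (fun z : ℤ => (z : ℝ))
          (by linarith : d.2 * p.1 - d.1 * p.2 = -c)
      have hLq : LF d (e q) = ((-c : ℤ) : ℝ) := by
        rw [LF_e]; exact_mod_cast congrArg (fun z : ℤ => (z : ℝ))
          (by linarith : d.2 * q.1 - d.1 * q.2 = -c)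
      rw [map_add, map_smul, map_smul, hLp, hLq, smul_eq_mul, smul_eq_mul,
        ← add_mul, hab, one_mul]
  have horient : ∀ x ∈ S, 0 ≤ (q.1 - p.1) * (x.2 - p.2) - (q.2 - p.2) * (x.1 - p.1) := by
    intro s hsS
    have hfs := hc s hsS
    have hid : (d.1 * (q.1 - p.1) + d.2 * (q.2 - p.2)) *
        ((q.1 - p.1) * (s.2 - p.2) - (q.2 - p.2) * (s.1 - p.1))
        = ((q.1 - p.1) * (q.1 - p.1) + (q.2 - p.2) * (q.2 - p.2)) *
        ((d.1 * s.2 - d.2 * s.1) - c) := by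
      linear_combination (-((q.1 - p.1) * (s.1 - p.1) + (q.2 - p.2) * (s.2 - p.2))) * hfw
        - ((q.1 - p.1) * (q.1 - p.1) + (q.2 - p.2) * (q.2 - p.2)) * hfp
    have h2 : 0 ≤ ((q.1 - p.1) * (q.1 - p.1) + (q.2 - p.2) * (q.2 - p.2)) *
        ((d.1 * s.2 - d.2 * s.1) - c) :=
      mul_nonneg (le_of_lt hww) (by linarith)
    nlinarith [hid, h2, hdw]
  exact ⟨p, q, ⟨⟨hpq, hpS, hqS, LF d, ((-c : ℤ) : ℝ), hbound, hface⟩, horient⟩, hpar⟩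

lemma extreme_of_unique_min {S : Finset (ℤ × ℤ)} {d x₀ : ℤ × ℤ} (c : ℤ)
    (hx₀S : x₀ ∈ S) (hfx₀ : d.1 * x₀.2 - d.2 * x₀.1 = c)
    (hc : ∀ y ∈ S, c ≤ d.1 * y.2 - d.2 * y.1)
    (huniq : ∀ y ∈ S, d.1 * y.2 - d.2 * y.1 = c → y = x₀) :
    IsExtremePt S x₀ := by
  classical
  have hbound : ∀ x ∈ convexHull ℝ (e '' (S : Set (ℤ × ℤ))), LF d x ≤ ((-c : ℤ) : ℝ) := by
    intro x hx
    have hsubs : e '' (S : Set (ℤ × ℤ)) ⊆ {x | LF d x ≤ ((-c : ℤ) : ℝ)} := by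
      rintro _ ⟨s, hsS, rfl⟩
      have := hc s hsS
      rw [Set.mem_setOf_eq, LF_e]
      exact_mod_cast (by linarith : d.2 * s.1 - d.1 * s.2 ≤ -c)
    exact convexHull_min hsubs (convex_halfSpace_le (LF d).isLinear _) hx
  have hfaceeq : ∀ x ∈ convexHull ℝ (e '' (S : Set (ℤ × ℤ))),
      LF d x = ((-c : ℤ) : ℝ) → x = e x₀ := by
    intro x hxhull hxc
    have hco : e '' (S : Set (ℤ × ℤ)) = ((S.image e : Finset (ℝ × ℝ)) : Set (ℝ × ℝ)) := by
      rw [Finset.coe_image]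
    have hface1 : x ∈ convexHull ℝ {v : ℝ × ℝ | v ∈ ((S.image e : Finset (ℝ × ℝ)) :
        Set (ℝ × ℝ)) ∧ LF d v = ((-c : ℤ) : ℝ)} := by
      refine face_subset _ _ _ ?_ ?_ hxc
      · intro w hw
        exact hbound w (subset_convexHull ℝ _ (hco ▸ hw))
      · rw [← hco]; exact hxhull
    have hsub1 : {v : ℝ × ℝ | v ∈ ((S.image e : Finset (ℝ × ℝ)) : Set (ℝ × ℝ)) ∧
        LF d v = ((-c : ℤ) : ℝ)} ⊆ {e x₀} := by
      rintro w ⟨hwmem, hwc⟩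
      rw [Finset.coe_image] at hwmem
      obtain ⟨s, hsS, rfl⟩ := hwmem
      rw [LF_e] at hwc
      have hfs : d.1 * s.2 - d.2 * s.1 = c := by
        have : d.2 * s.1 - d.1 * s.2 = -c := by exact_mod_cast hwc
        linarith
      rw [huniq s hsS hfs]; rfl
    have := convexHull_min hsub1 (convex_singleton _) hface1
    exact this
  rw [IsExtremePt, mem_extremePoints]
  refine ⟨subset_convexHull ℝ _ ⟨x₀, hx₀S, rfl⟩, ?_⟩
  intro x₁ h₁ x₂ h₂ hseg
  obtain ⟨a, b, ha, hb, hab, habeq⟩ := hseg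
  have hL1 : LF d x₁ ≤ ((-c : ℤ) : ℝ) := hbound x₁ h₁
  have hL2 : LF d x₂ ≤ ((-c : ℤ) : ℝ) := hbound x₂ h₂
  have hLx₀ : LF d (e x₀) = ((-c : ℤ) : ℝ) := by
    rw [LF_e]
    exact_mod_cast congrArg (fun z : ℤ => (z : ℝ)) (by linarith : d.2 * x₀.1 - d.1 * x₀.2 = -c)
  have hsum : a * LF d x₁ + b * LF d x₂ = ((-c : ℤ) : ℝ) := by
    rw [← hLx₀, ← habeq, map_add, map_smul, map_smul, smul_eq_mul, smul_eq_mul]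
  have hcomb : a * ((-c : ℤ) : ℝ) + b * ((-c : ℤ) : ℝ) = ((-c : ℤ) : ℝ) := by
    rw [← add_mul, hab, one_mul]
  have he1 : LF d x₁ = ((-c : ℤ) : ℝ) := by
    by_contra hne
    have hlt : LF d x₁ < ((-c : ℤ) : ℝ) := lt_of_le_of_ne hL1 hne
    have h1 := mul_lt_mul_of_pos_left hlt ha
    have h2 := mul_le_mul_of_nonneg_left hL2 (le_of_lt hb)
    linarith
  have he2 : LF d x₂ = ((-c : ℤ) : ℝ) := by
    by_contra hne
    have hlt : LF d x₂ < ((-c : ℤ) : ℝ) := lt_of_le_of_ne hL2 hne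
    have h1 := mul_lt_mul_of_pos_left hlt hb
    have h2 := mul_le_mul_of_nonneg_left hL1 (le_of_lt ha)
    linarith
  exact ⟨hfaceeq x₁ h₁ he1, hfaceeq x₂ h₂ he2⟩

lemma determined_of_generated {A : Type*} (η : ℤ × ℤ → A) {S : Finset (ℤ × ℤ)} {x₀ : ℤ × ℤ}
    (hx₀S : x₀ ∈ S) (hgen : Generated η S x₀) (u' v' : ℤ × ℤ)
    (h : ∀ y ∈ S, y ≠ x₀ → η (y + u') = η (y + v')) : η (x₀ + u') = η (x₀ + v') := by
  obtain ⟨β, ⟨hβr, hβres⟩, huniq⟩ := hgen (pat η (S.erase x₀) u') ⟨u', rfl⟩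
  have h1 : pat η S u' = β := by
    apply huniq
    exact ⟨⟨u', rfl⟩, rfl⟩
  have h2 : pat η S v' = β := by
    apply huniq
    refine ⟨⟨v', rfl⟩, ?_⟩
    funext z
    obtain ⟨hzne, hzS⟩ := Finset.mem_erase.1 z.2
    exact (h z hzS hzne).symm
  have := congrFun (h1.trans h2.symm) ⟨x₀, hx₀S⟩
  exact this

lemma abs_mul_le' {a w B : ℤ} (h : |w| ≤ B) : |a * w| ≤ |a| * B := by
  rw [abs_mul]
  exact mul_le_mul_of_nonneg_left h (abs_nonneg a)

set_option maxHeartbeats 1000000 in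
lemma expansive_of_corner {A : Type*} (η : ℤ × ℤ → A) (n k : ℕ) {S : Finset (ℤ × ℤ)}
    (hsub : S ⊆ Rect n k) {d : ℤ × ℤ} (hd : d ≠ 0) {x₀ : ℤ × ℤ} (hx₀S : x₀ ∈ S)
    (hstrict : ∀ y ∈ S, y ≠ x₀ →
      d.1 * x₀.2 - d.2 * x₀.1 + 1 ≤ d.1 * y.2 - d.2 * y.1)
    (hdet : ∀ u' v' : ℤ × ℤ, (∀ y ∈ S, y ≠ x₀ → η (y + u') = η (y + v')) →
      η (x₀ + u') = η (x₀ + v')) :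
    OneSidedExpansive η d := by
  classical
  have hdor : d.1 ≠ 0 ∨ d.2 ≠ 0 := by
    by_contra hcon
    push_neg at hcon
    exact hd (Prod.ext hcon.1 hcon.2)
  have hgpos : 0 < Int.gcd d.1 d.2 := Int.gcd_pos_iff.2 hdor
  set g : ℤ := (Int.gcd d.1 d.2 : ℤ) with hgdef
  have hgpos' : 0 < g := by rw [hgdef]; exact_mod_cast hgpos
  set d1 : ℤ := d.1 / g with hd1def
  set d2 : ℤ := d.2 / g with hd2def
  have hd1 : g * d1 = d.1 := Int.mul_ediv_cancel' (Int.gcd_dvd_left _ _)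
  have hd2 : g * d2 = d.2 := Int.mul_ediv_cancel' (Int.gcd_dvd_right _ _)
  have hcop : Int.gcd d1 d2 = 1 := Int.gcd_div_gcd_div_gcd hgpos
  set α : ℤ := Int.gcdA d1 d2 with hαdef
  set β : ℤ := Int.gcdB d1 d2 with hβdef
  have hbez : d1 * α + d2 * β = 1 := by
    have h := Int.gcd_eq_gcd_ab d1 d2
    rw [hcop] at h
    exact_mod_cast h.symm
  set M : Matrix (Fin 2) (Fin 2) ℤ := !![-β, -d1; α, -d2] with hMdef
  have hM00 : M 0 0 = -β := rfl
  have hM01 : M 0 1 = -d1 := rfl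
  have hM10 : M 1 0 = α := rfl
  have hM11 : M 1 1 = -d2 := rfl
  refine ⟨d1.natAbs * k + d2.natAbs * n, α.natAbs * n + β.natAbs * k, M, ?_, ?_, ?_⟩
  · rw [hMdef, Matrix.det_fin_two_of]
    linear_combination hbez
  · refine ⟨g, 1, hgpos', one_pos, ?_⟩
    have hMv : Mv M ((0 : ℤ), (-1 : ℤ)) = (d1, d2) := by
      simp only [Mv, hM00, hM01, hM10, hM11, Prod.mk.injEq]
      constructor <;> ring
    rw [hMv]
    apply Prod.ext <;> simp only [Prod.smul_fst, Prod.smul_snd, smul_eq_mul]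
    · rw [hd1]; ring
    · rw [hd2]; ring
  · intro u v H
    set a : ℤ := ((d1.natAbs * k + d2.natAbs * n : ℕ) : ℤ) with hadef
    set b : ℤ := ((α.natAbs * n + β.natAbs * k : ℕ) : ℤ) with hbdef
    have haval : a = |d1| * k + |d2| * n := by
      rw [hadef]; push_cast [Int.natCast_natAbs]; ring
    have hbval : b = |α| * n + |β| * k := by
      rw [hbdef]; push_cast [Int.natCast_natAbs]; ring
    have key : ∀ y ∈ S, y ≠ x₀ →
        η (y + (Mv M ((-1, 0) + u) - x₀)) = η (y + (Mv M ((-1, 0) + v) - x₀)) := by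
      intro y hyS hyne
      set w : ℤ × ℤ := y - x₀ with hwdef
      set z : ℤ × ℤ := (d1 * w.2 - d2 * w.1 - 1, -(α * w.1) - β * w.2) with hzdef
      -- bounds on w from the rectangle
      obtain ⟨hy1, hy2⟩ := Finset.mem_product.1 (hsub hyS)
      obtain ⟨hx1, hx2⟩ := Finset.mem_product.1 (hsub hx₀S)
      rw [Finset.mem_Ico] at hy1 hy2 hx1 hx2
      have hw1 : |w.1| ≤ (n : ℤ) := by
        rw [hwdef, abs_le]; constructor <;> simp only [Prod.fst_sub] <;> omega
      have hw2 : |w.2| ≤ (k : ℤ) := by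
        rw [hwdef, abs_le]; constructor <;> simp only [Prod.snd_sub] <;> omega
      -- z.1 ≥ 0
      have hfy := hstrict y hyS hyne
      have hgz : g * (z.1 + 1) = d.1 * w.2 - d.2 * w.1 := by
        rw [hzdef]; simp only
        rw [← hd1, ← hd2]; ring
      have hfw : (1 : ℤ) ≤ d.1 * w.2 - d.2 * w.1 := by
        rw [hwdef]; simp only [Prod.fst_sub, Prod.snd_sub]; nlinarith [hfy]
      have hz1pos : 0 ≤ z.1 := by nlinarith [hgz, hfw, hgpos']
      have hz1le : z.1 ≤ a := by
        have h1 : |d1 * w.2| ≤ |d1| * k := abs_mul_le' hw2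
        have h2 : |d2 * w.1| ≤ |d2| * n := abs_mul_le' hw1
        rw [haval, hzdef]
        simp only
        have := le_abs_self (d1 * w.2)
        have := neg_abs_le (d2 * w.1)
        linarith
      have hz2le : |z.2| ≤ b := by
        have h1 : |α * w.1| ≤ |α| * n := abs_mul_le' hw1
        have h2 : |β * w.2| ≤ |β| * k := abs_mul_le' hw2
        rw [hbval, hzdef]
        simp only
        have h3 : |(-(α * w.1) - β * w.2)| ≤ |α * w.1| + |β * w.2| := by
          rw [sub_eq_add_neg]
          calc |(-(α * w.1)) + (-(β * w.2))| ≤ |(-(α * w.1))| + |(-(β * w.2))| := abs_add_le _ _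
          _ = |α * w.1| + |β * w.2| := by rw [abs_neg, abs_neg]
        linarith
      -- the key coordinate identity
      have hMz : ∀ t : ℤ × ℤ, Mv M (z + t) = y + (Mv M ((-1, 0) + t) - x₀) := by
        intro t
        simp only [Mv, hM00, hM01, hM10, hM11, hzdef, hwdef]
        apply Prod.ext <;>
          simp only [Prod.fst_add, Prod.snd_add, Prod.fst_sub, Prod.snd_sub]
        · linear_combination (y.1 - x₀.1) * hbez
        · linear_combination (y.2 - x₀.2) * hbez
      have hz2a : -(z.2) ≤ b := by
        have := abs_le.1 hz2le
        linarith [this.1]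
      have := H z hz1pos hz1le (by linarith [(abs_le.1 hz2le).1]) (abs_le.1 hz2le).2
      rw [hMz u, hMz v] at this
      exact this
    have hres := hdet _ _ key
    simpa [add_sub_cancel] using hres

end AuxN
end Nivat

namespace Nivat

/-- If `P_η(R_{n,k}) ≤ nk`, `S ⊆ R_{n,k}` is an `η`-generating set, and the
directed rational line with direction `d` is one-sided `η`-nonexpansive, then
`S` has a boundary edge parallel to `d`; in particular some translate of the
line meets `R_{n,k}` in at least two lattice points. -/
theorem statement16 {A : Type*} [Finite A] (η : ℤ × ℤ → A)
    (n k : ℕ) (hn : 1 ≤ n) (hk : 1 ≤ k)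
    (hP : Pc η (Rect n k) ≤ n * k)
    (S : Finset (ℤ × ℤ)) (hsub : S ⊆ Rect n k) (hgen : Generating η S)
    (d : ℤ × ℤ) (hd : d ≠ 0) (hne : ¬ OneSidedExpansive η d) :
    (∃ p q : ℤ × ℤ, IsOrientedEdge S p q ∧ PosParallel (q - p) d) ∧
      ∃ x ∈ Rect n k, ∃ y ∈ Rect n k, x ≠ y ∧
        (y.1 - x.1) * d.2 = (y.2 - x.2) * d.1 := by
  classical
  obtain ⟨⟨hSne, hSconv, hSgen⟩, _hmin⟩ := hgen
  obtain ⟨x₀, hx₀S, hx₀min⟩ := S.exists_min_image (fun y => d.1 * y.2 - d.2 * y.1) hSne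
  by_cases h2 : ∃ v ∈ S, v ≠ x₀ ∧ d.1 * v.2 - d.2 * v.1 = d.1 * x₀.2 - d.2 * x₀.1
  · obtain ⟨v, hvS, hvne, hfv⟩ := h2
    obtain ⟨p, q, hedge, hpar⟩ :=
      exists_edge hd (d.1 * x₀.2 - d.2 * x₀.1) hx₀min hx₀S hvS (Ne.symm hvne) rfl hfv
    obtain ⟨t₁, t₂, ht₁, ht₂, heq⟩ := hpar
    have h1 : t₁ * (q.1 - p.1) = t₂ * d.1 := by
      have := congrArg Prod.fst heq
      simpa [Prod.smul_fst, smul_eq_mul] using this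
    have h3 : t₁ * (q.2 - p.2) = t₂ * d.2 := by
      have := congrArg Prod.snd heq
      simpa [Prod.smul_snd, smul_eq_mul] using this
    refine ⟨⟨p, q, hedge, ⟨t₁, t₂, ht₁, ht₂, heq⟩⟩,
      p, hsub hedge.1.2.1, q, hsub hedge.1.2.2.1, hedge.1.1, ?_⟩
    apply mul_left_cancel₀ (ne_of_gt ht₁)
    linear_combination d.2 * h1 - d.1 * h3
  · push_neg at h2
    have huniq : ∀ y ∈ S, d.1 * y.2 - d.2 * y.1 = d.1 * x₀.2 - d.2 * x₀.1 → y = x₀ := by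
      intro y hyS hfy
      by_contra hne'
      exact h2 y hyS hne' hfy
    have hstrict : ∀ y ∈ S, y ≠ x₀ →
        d.1 * x₀.2 - d.2 * x₀.1 + 1 ≤ d.1 * y.2 - d.2 * y.1 := by
      intro y hyS hyne
      have hle := hx₀min y hyS
      have hneq : d.1 * x₀.2 - d.2 * x₀.1 ≠ d.1 * y.2 - d.2 * y.1 :=
        fun h => hyne (huniq y hyS h.symm)
      exact Int.add_one_le_iff.2 (lt_of_le_of_ne hle hneq)
    have hextreme : IsExtremePt S x₀ :=
      extreme_of_unique_min (d.1 * x₀.2 - d.2 * x₀.1) hx₀S rfl hx₀min huniq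
    have hgen' : Generated η S x₀ := hSgen x₀ hx₀S hextreme
    have hdet : ∀ u' v' : ℤ × ℤ, (∀ y ∈ S, y ≠ x₀ → η (y + u') = η (y + v')) →
        η (x₀ + u') = η (x₀ + v') :=
      fun u' v' h => determined_of_generated η hx₀S hgen' u' v' h
    exact absurd (expansive_of_corner η n k hsub hd hx₀S hstrict hdet) hne

end Nivat
end
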